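/- A history t₀ = (V₀,E₀) determines a unique label-collapsed history t_c which is the result of a finite sequence of edge collapses: there exists a finite sequence of histories t₀, t₁, …, t_n such that each tᵢ is the result of collapsing in t_{i-1} some edge eᵢ = ((ℓᵢ,Uᵢ),(ℓᵢ',Uᵢ')) with ℓᵢ = ℓᵢ' and Uᵢ' ≠ ∅, and t_n is label-collapsed; moreover, for any such sequence the final history t_n equals t_c. -/

import Mathlib

universe u v

/-- A node of a history sDAG: either the universal ancestor (UA) node `ρ`,
or a node carrying a label `ℓ : Y` and a subpartition `U : Set (Set Y)`. -/
inductive HNode (Y : Type u) : Type u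
  | ua : HNode Y
  | node : Y → Set (Set Y) → HNode Y

namespace HistorySDAGs

variable {Y : Type u}

/-- `U ∈ Part(Y)`: `U` is a set of pairwise disjoint nonempty (finite) clades with `|U| ≠ 1`. -/
def IsPart (U : Set (Set Y)) : Prop :=
  (∀ C ∈ U, C ≠ ∅) ∧
  (∀ C₁ ∈ U, ∀ C₂ ∈ U, C₁ ≠ C₂ → Disjoint C₁ C₂) ∧
  (∀ C, U ≠ {C}) ∧
  U.Finite ∧ ∀ C ∈ U, C.Finite

open Classical in
/-- The clade union of a node. -/
noncomputable def cladeUnion : HNode Y → Set Y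
  | HNode.ua => ∅
  | HNode.node ℓ U => if U = ∅ then {ℓ} else ⋃₀ U

/-- Reachability via directed edges in `E`. -/
def Reach (E : Set (HNode Y × HNode Y)) (a b : HNode Y) : Prop :=
  Relation.ReflTransGen (fun x y => (x, y) ∈ E) a b

/-- `(V, E)` is a history sDAG on labels `Y`. -/
structure IsHSDAG (V : Set (HNode Y)) (E : Set (HNode Y × HNode Y)) : Prop where
  ua_mem : HNode.ua ∈ V
  valid : ∀ ℓ U, HNode.node ℓ U ∈ V → IsPart U
  edge_mem : ∀ e ∈ E, e.1 ∈ V ∧ e.2 ∈ V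
  reach_ua : ∀ v ∈ V, Reach E HNode.ua v
  no_in_ua : ∀ v : HNode Y, (v, HNode.ua) ∉ E
  edge_clade : ∀ ℓ U v, (HNode.node ℓ U, v) ∈ E → cladeUnion v ∈ U
  clade_cov : ∀ ℓ U, HNode.node ℓ U ∈ V → ∀ C ∈ U,
      ∃ v, (HNode.node ℓ U, v) ∈ E ∧ cladeUnion v = C

/-- Every node-clade pair of `V` has exactly one descendant edge in `E`. -/
def UniqueDesc (V : Set (HNode Y)) (E : Set (HNode Y × HNode Y)) : Prop :=
  ∀ ℓ U, HNode.node ℓ U ∈ V → ∀ C ∈ U,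
    ∃! vc, (HNode.node ℓ U, vc) ∈ E ∧ cladeUnion vc = C

/-- `(V, E)` is a history: a history sDAG in which `ρ` has exactly one child and
each node-clade pair has exactly one descendant edge. -/
def IsHistory (V : Set (HNode Y)) (E : Set (HNode Y × HNode Y)) : Prop :=
  IsHSDAG V E ∧ (∃! v, (HNode.ua, v) ∈ E) ∧ UniqueDesc V E

/-- `(Vs, Es)` is a subhistory of `(V, E)` with root node `vr`. -/
structure IsSubhistoryRooted (V : Set (HNode Y)) (E : Set (HNode Y × HNode Y))
    (Vs : Set (HNode Y)) (Es : Set (HNode Y × HNode Y)) (vr : HNode Y) : Prop where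
  subV : Vs ⊆ V
  subE : Es ⊆ E
  ua_not_mem : HNode.ua ∉ Vs
  edge_mem : ∀ e ∈ Es, e.1 ∈ Vs ∧ e.2 ∈ Vs
  root_mem : vr ∈ Vs
  reach_root : ∀ v ∈ Vs, Reach Es vr v
  unique_desc : ∀ ℓ U, HNode.node ℓ U ∈ Vs → ∀ C ∈ U,
      ∃! vc, (HNode.node ℓ U, vc) ∈ Es ∧ cladeUnion vc = C

/-- `(Vs, Es)` is a subhistory of `(V, E)`. -/
def IsSubhistory (V : Set (HNode Y)) (E : Set (HNode Y × HNode Y))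
    (Vs : Set (HNode Y)) (Es : Set (HNode Y × HNode Y)) : Prop :=
  ∃ vr, IsSubhistoryRooted V E Vs Es vr

/-- `(Vt, Et)` is a history in (a trim of) the history sDAG `(V, E)`. -/
def HistoryIn (V : Set (HNode Y)) (E : Set (HNode Y × HNode Y))
    (Vt : Set (HNode Y)) (Et : Set (HNode Y × HNode Y)) : Prop :=
  Vt ⊆ V ∧ Et ⊆ E ∧ IsHistory Vt Et

/-- The set of labels of leaf nodes in a node set. -/
def leafLabels (Vt : Set (HNode Y)) : Set Y := {ℓ | HNode.node ℓ ∅ ∈ Vt}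

/-- A candidate history/graph: a pair of a node set and an edge set. -/
abbrev Hist (Y : Type u) := Set (HNode Y) × Set (HNode Y × HNode Y)

/-- The node set of the history sDAG constructed from the collection `T`. -/
def unionV (T : Set (Hist Y)) : Set (HNode Y) := ⋃ t ∈ T, t.1

/-- The edge set of the history sDAG constructed from the collection `T`. -/
def unionE (T : Set (Hist Y)) : Set (HNode Y × HNode Y) := ⋃ t ∈ T, t.2

/-- The node set of the complete history sDAG on labels `Y`. -/
def completeV (Y : Type u) : Set (HNode Y) :=
  {v | v = HNode.ua ∨ ∃ ℓ U, v = HNode.node ℓ U ∧ IsPart U}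

/-- The edge set of the complete history sDAG on labels `Y`. -/
def completeE (Y : Type u) : Set (HNode Y × HNode Y) :=
  {e | e.1 ∈ completeV Y ∧ e.2 ∈ completeV Y ∧ e.2 ≠ HNode.ua ∧
    (e.1 = HNode.ua ∨ ∃ ℓ U, e.1 = HNode.node ℓ U ∧ cladeUnion e.2 ∈ U)}

variable {W : Type v}

/-- The weight `g_f` of a subgraph with edge set `Es`: the sum of `f` over all edges. -/
noncomputable def gweight [AddCommMonoid W] (f : HNode Y × HNode Y → W)
    (Es : Set (HNode Y × HNode Y)) : W := ∑ᶠ e ∈ Es, f e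

/-- The order is total on the subset `S` of `W`. -/
def TotalOn [PartialOrder W] (S : Set W) : Prop := ∀ a ∈ S, ∀ b ∈ S, a ≤ b ∨ b ≤ a

/-- The order respects addition on the subset `S` of `W`. -/
def RespectsAdd [AddCommMonoid W] [PartialOrder W] (S : Set W) : Prop :=
  ∀ a ∈ S, ∀ b ∈ S, ∀ c : W, a < b ↔ a + c < b + c

/-- Weights of subhistories of `(V, E)` rooted at `v`. -/
def subWeights [AddCommMonoid W] (f : HNode Y × HNode Y → W)
    (V : Set (HNode Y)) (E : Set (HNode Y × HNode Y)) (v : HNode Y) : Set W :=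
  {w | ∃ Vs Es, IsSubhistoryRooted V E Vs Es v ∧ w = gweight f Es}

/-- Weights of augmented subhistories below the node-clade pair `(v, C)`. -/
def augWeights [AddCommMonoid W] (f : HNode Y × HNode Y → W)
    (V : Set (HNode Y)) (E : Set (HNode Y × HNode Y)) (v : HNode Y) (C : Set Y) : Set W :=
  {w | ∃ vc Vs Es, (v, vc) ∈ E ∧ cladeUnion vc = C ∧ IsSubhistoryRooted V E Vs Es vc ∧
    w = gweight f (insert (v, vc) Es)}

/-- Weights of histories in `(V, E)`. -/
def historyWeights [AddCommMonoid W] (f : HNode Y × HNode Y → W)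
    (V : Set (HNode Y)) (E : Set (HNode Y × HNode Y)) : Set W :=
  {w | ∃ Vt Et, HistoryIn V E Vt Et ∧ w = gweight f Et}

/-- `W` is clade-ordered with respect to `f` and `(V, E)`. -/
def CladeOrdered [AddCommMonoid W] [PartialOrder W] (f : HNode Y × HNode Y → W)
    (V : Set (HNode Y)) (E : Set (HNode Y × HNode Y)) : Prop :=
  (∀ v ∈ V, v ≠ HNode.ua →
      TotalOn (subWeights f V E v) ∧ RespectsAdd (subWeights f V E v)) ∧
  (∀ ℓ U, HNode.node ℓ U ∈ V → ∀ C ∈ U,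
      TotalOn (augWeights f V E (HNode.node ℓ U) C) ∧
      RespectsAdd (augWeights f V E (HNode.node ℓ U) C)) ∧
  TotalOn (historyWeights f V E)

/-- The minimum-weight histories in `(V, E)` with respect to `g_f`. -/
def minHistories [AddCommMonoid W] [PartialOrder W] (f : HNode Y × HNode Y → W)
    (V : Set (HNode Y)) (E : Set (HNode Y × HNode Y)) : Set (Hist Y) :=
  {t | HistoryIn V E t.1 t.2 ∧
    ∀ t' : Hist Y, HistoryIn V E t'.1 t'.2 → gweight f t.2 ≤ gweight f t'.2}

open Classical in
/-- The map `q` collapsing the edge `(vp, vc)`, sending both `vp` and `vc` to `vp'`. -/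
noncomputable def collapseMap (vp vc vp' : HNode Y) (v : HNode Y) : HNode Y :=
  if v = vp ∨ v = vc then vp' else v

/-- The history obtained by collapsing the edge `(vp, vc)` (into `vp'`) in `t`. -/
noncomputable def collapseEdgeHist (vp vc vp' : HNode Y) (t : Hist Y) : Hist Y :=
  (collapseMap vp vc vp' '' t.1,
   (fun e : HNode Y × HNode Y => (collapseMap vp vc vp' e.1, collapseMap vp vc vp' e.2)) ''
     (t.2 \ {(vp, vc)}))

/-- The new parent node `(ℓ_p, (U_p ∪ U_c) \ {CU(v_c)})` formed when collapsing an edge. -/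
noncomputable def newParent : HNode Y → HNode Y → HNode Y
  | HNode.node ℓp Up, HNode.node ℓc Uc =>
      HNode.node ℓp ((Up ∪ Uc) \ {cladeUnion (HNode.node ℓc Uc)})
  | v, _ => v

/-- `t'` results from `t` by collapsing one label-collapsible edge. -/
def LabelCollapseStep (t t' : Hist Y) : Prop :=
  ∃ ℓ Up Uc, (HNode.node ℓ Up, HNode.node ℓ Uc) ∈ t.2 ∧ Uc ≠ ∅ ∧
    t' = collapseEdgeHist (HNode.node ℓ Up) (HNode.node ℓ Uc)
        (newParent (HNode.node ℓ Up) (HNode.node ℓ Uc)) t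

/-- `t` is label-collapsed: it has no label-collapsible edge. -/
def LabelCollapsed (t : Hist Y) : Prop :=
  ∀ ℓ Up Uc, (HNode.node ℓ Up, HNode.node ℓ Uc) ∈ t.2 → Uc = ∅

/-- `(vp, vc)` is a label-collapsible edge of `G`. -/
def LabelCollapsibleEdge (G : Hist Y) (vp vc : HNode Y) : Prop :=
  (vp, vc) ∈ G.2 ∧ ∃ ℓ Up Uc, vp = HNode.node ℓ Up ∧ vc = HNode.node ℓ Uc ∧ Uc ≠ ∅

/-- `T` is a label-collapsible edge cover of `G`. -/
def LabelCollapsibleEdgeCover (G : Hist Y) (T : Set (Hist Y)) : Prop :=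
  (∀ t ∈ T, HistoryIn G.1 G.2 t.1 t.2) ∧
  (∀ e ∈ G.2, ∃ t ∈ T, e ∈ t.2) ∧
  (∀ vp vc, LabelCollapsibleEdge G vp vc →
    ∀ Vs Es, IsSubhistory G.1 G.2 Vs Es → (vp, vc) ∈ Es →
      ∃ t ∈ T, Vs ⊆ t.1 ∧ Es ⊆ t.2)

open Classical in
/-- Collapsing the edge `(vp, vc)` in the history sDAG `G`, via `E⁺`, `R`, `E⁻`, `E'`, `V'`. -/
noncomputable def collapseDAGEdge (vp vc : HNode Y) (G : Hist Y) : Hist Y :=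
  let vp' := newParent vp vc
  let Eplus : Set (HNode Y × HNode Y) :=
    (G.2 ∪ {e | ∃ v, e = (v, vp') ∧ (v, vp) ∈ G.2}
        ∪ {e | ∃ v, e = (vp', v) ∧ (vp, v) ∈ G.2 ∧ cladeUnion v ≠ cladeUnion vc}
        ∪ {e | ∃ v, e = (vp', v) ∧ (vc, v) ∈ G.2}) \ {(vp, vc)}
  let R : Set (HNode Y × HNode Y) :=
    if ∃ v, (vp, v) ∈ Eplus ∧ cladeUnion v = cladeUnion vc then ∅
    else {e ∈ Eplus | e.2 = vp}
  let Eminus := Eplus \ R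
  let E' := {e ∈ Eminus | Reach Eminus HNode.ua e.1}
  ({v | ∃ e ∈ E', v = e.1 ∨ v = e.2}, E')

/-- `t'` is obtained from `t` by a subhistory swap, replacing a subhistory of `t` by a
conforming subhistory of some history in `S`. -/
def SwapStepUsing (S : Set (Hist Y)) (t t' : Hist Y) : Prop :=
  ∃ t₂ ∈ S, ∃ Vs' Es' vr' vp,
    IsSubhistoryRooted t₂.1 t₂.2 Vs' Es' vr' ∧ (vp, vr') ∈ t₂.2 ∧
    ∃ Vs Es vr, IsSubhistoryRooted t.1 t.2 Vs Es vr ∧ (vp, vr) ∈ t.2 ∧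
      leafLabels Vs = leafLabels Vs' ∧
      t' = ((t.1 \ Vs) ∪ Vs', (t.2 \ (Es ∪ {(vp, vr)})) ∪ (Es' ∪ {(vp, vr')}))

/-- Leaves of an abstract rooted graph. -/
def IsLeafIn {α : Type v} (nodes : Set α) (edges : Set (α × α)) (x : α) : Prop :=
  x ∈ nodes ∧ ∀ c, (x, c) ∉ edges

/-- Reachability via directed edges in an abstract graph. -/
def GReach {α : Type v} (edges : Set (α × α)) (a b : α) : Prop :=
  Relation.ReflTransGen (fun x y => (x, y) ∈ edges) a b

/-- An (internally) labeled tree: a rooted multifurcating tree with no unifurcations,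
with node labels in `Y` that are injective on leaves. -/
structure IsLabeledTree {α : Type v} (nodes : Set α) (edges : Set (α × α))
    (root : α) (lab : α → Y) : Prop where
  root_mem : root ∈ nodes
  edge_mem : ∀ e ∈ edges, e.1 ∈ nodes ∧ e.2 ∈ nodes
  reach_root : ∀ x ∈ nodes, GReach edges root x
  unique_parent : ∀ x a b, (a, x) ∈ edges → (b, x) ∈ edges → a = b
  no_parent_root : ∀ a, (a, root) ∉ edges
  acyclic : ∀ x, ¬ Relation.TransGen (fun a b => (a, b) ∈ edges) x x
  no_unif : ∀ x ∈ nodes, ¬ (∃! c, (x, c) ∈ edges)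
  leaf_inj : ∀ x y, IsLeafIn nodes edges x → IsLeafIn nodes edges y → lab x = lab y → x = y
  finite : nodes.Finite

/-- The set `C_w` of leaf labels below a node `w` of an abstract labeled tree. -/
def leavesBelow {α : Type v} (nodes : Set α) (edges : Set (α × α)) (lab : α → Y) (w : α) :
    Set Y :=
  {y | ∃ u, IsLeafIn nodes edges u ∧ GReach edges w u ∧ y = lab u}

/-- The history sDAG node `v_w` associated to a node `w` of a labeled tree. -/
def treeNodeOf {α : Type v} (nodes : Set α) (edges : Set (α × α)) (lab : α → Y) (w : α) :
    HNode Y :=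
  HNode.node (lab w) {C | ∃ w', (w, w') ∈ edges ∧ C = leavesBelow nodes edges lab w'}

/-- The node set `V_t` of the history associated to a labeled tree. -/
def treeToHistV {α : Type v} (nodes : Set α) (edges : Set (α × α)) (lab : α → Y) :
    Set (HNode Y) :=
  insert HNode.ua (treeNodeOf nodes edges lab '' nodes)

/-- The edge set `E_t` of the history associated to a labeled tree. -/
def treeToHistE {α : Type v} (nodes : Set α) (edges : Set (α × α)) (root : α) (lab : α → Y) :
    Set (HNode Y × HNode Y) :=
  insert (HNode.ua, treeNodeOf nodes edges lab root)
    {e | ∃ w₁ w₂, (w₁, w₂) ∈ edges ∧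
      e = (treeNodeOf nodes edges lab w₁, treeNodeOf nodes edges lab w₂)}



section CollapseProof

variable {Y : Type u}

lemma IsPart.nonempty_mem {U : Set (Set Y)} (h : IsPart U) {C : Set Y} (hC : C ∈ U) :
    C.Nonempty := Set.nonempty_iff_ne_empty.2 (h.1 C hC)

lemma IsPart.exists_ne {U : Set (Set Y)} (h : IsPart U) {C : Set Y} (hC : C ∈ U) :
    ∃ D ∈ U, D ≠ C := by
  by_contra hcon
  push_neg at hcon
  exact h.2.2.1 C (Set.eq_singleton_iff_unique_mem.2 ⟨hC, hcon⟩)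

lemma IsPart.sUnion_not_mem {U : Set (Set Y)} (h : IsPart U) : ⋃₀ U ∉ U := by
  intro hmem
  obtain ⟨D, hD, hne⟩ := h.exists_ne hmem
  have hdisj := h.2.1 D hD _ hmem hne
  exact absurd (hdisj.eq_bot_of_le (Set.subset_sUnion_of_mem hD)) (h.1 D hD)

lemma cu_node_of_ne {ℓ : Y} {U : Set (Set Y)} (h : U ≠ ∅) :
    cladeUnion (HNode.node ℓ U) = ⋃₀ U := by
  simp [cladeUnion, h]

lemma cu_subset_of_mem {ℓ : Y} {U : Set (Set Y)} {C : Set Y} (h : C ∈ U) :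
    C ⊆ cladeUnion (HNode.node ℓ U) := by
  have hU : U ≠ ∅ := by rintro rfl; exact h
  rw [cu_node_of_ne hU]
  exact Set.subset_sUnion_of_mem h

lemma cu_nonempty_part {ℓ : Y} {U : Set (Set Y)} (h : IsPart U) :
    (cladeUnion (HNode.node ℓ U)).Nonempty := by
  by_cases hU : U = ∅
  · subst hU; simp [cladeUnion]
  · obtain ⟨C, hC⟩ := Set.nonempty_iff_ne_empty.2 hU
    exact (h.nonempty_mem hC).mono (cu_subset_of_mem hC)

lemma cu_finite_part {ℓ : Y} {U : Set (Set Y)} (h : IsPart U) :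
    (cladeUnion (HNode.node ℓ U)).Finite := by
  by_cases hU : U = ∅
  · subst hU; simp [cladeUnion]
  · rw [cu_node_of_ne hU]
    exact Set.Finite.sUnion h.2.2.2.1 h.2.2.2.2

@[simp] lemma newParent_node {ℓp ℓc : Y} {Up Uc : Set (Set Y)} :
    newParent (HNode.node ℓp Up) (HNode.node ℓc Uc)
      = HNode.node ℓp ((Up ∪ Uc) \ {cladeUnion (HNode.node ℓc Uc)}) := rfl


section HistoryStruct

variable {V : Set (HNode Y)} {E : Set (HNode Y × HNode Y)}

lemma reach_to_ua (hH : IsHistory V E) {v : HNode Y} (h : Reach E v HNode.ua) :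
    v = HNode.ua := by
  induction h using Relation.ReflTransGen.head_induction_on with
  | refl => rfl
  | head hedge _ ih =>
    subst ih
    exact absurd hedge (hH.1.no_in_ua _)

lemma snd_ne_ua (hH : IsHistory V E) {a b : HNode Y} (h : (a, b) ∈ E) : b ≠ HNode.ua := by
  rintro rfl; exact hH.1.no_in_ua a h

lemma cu_subset_of_edge (hH : IsHistory V E) {ℓ : Y} {U : Set (Set Y)} {w : HNode Y}
    (h : (HNode.node ℓ U, w) ∈ E) : cladeUnion w ⊆ cladeUnion (HNode.node ℓ U) :=
  cu_subset_of_mem (hH.1.edge_clade _ _ _ h)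

lemma cu_ssubset_of_edge (hH : IsHistory V E) {ℓ : Y} {U : Set (Set Y)} {w : HNode Y}
    (h : (HNode.node ℓ U, w) ∈ E) : cladeUnion w ⊂ cladeUnion (HNode.node ℓ U) := by
  have hP : IsPart U := hH.1.valid _ _ (hH.1.edge_mem _ h).1
  have hmem := hH.1.edge_clade _ _ _ h
  refine ⟨cu_subset_of_edge hH h, fun hcon => ?_⟩
  obtain ⟨D, hD, hne⟩ := hP.exists_ne hmem
  obtain ⟨y, hy⟩ := hP.nonempty_mem hD
  have hyc : y ∈ cladeUnion w := hcon (cu_subset_of_mem hD hy)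
  exact Set.disjoint_left.1 (hP.2.1 D hD _ hmem hne) hy hyc

lemma cu_subset_of_reach (hH : IsHistory V E) {v w : HNode Y} (hv : v ≠ HNode.ua)
    (h : Reach E v w) : cladeUnion w ⊆ cladeUnion v := by
  induction h with
  | refl => exact subset_rfl
  | tail hr hedge ih =>
    rename_i b c
    have hb : b ≠ HNode.ua := fun hb => hv (by rw [hb] at hr; exact reach_to_ua hH hr)
    cases b with
    | ua => exact absurd rfl hb
    | node ℓ U => exact (cu_subset_of_edge hH hedge).trans ih

lemma cu_ssubset_of_reach_ne (hH : IsHistory V E) {v w : HNode Y} (hv : v ≠ HNode.ua)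
    (h : Reach E v w) (hne : w ≠ v) : cladeUnion w ⊂ cladeUnion v := by
  rcases Relation.ReflTransGen.cases_head h with rfl | ⟨y, hvy, hyw⟩
  · exact absurd rfl hne
  · have hy : y ≠ HNode.ua := snd_ne_ua hH hvy
    cases v with
    | ua => exact absurd rfl hv
    | node ℓ U =>
      exact lt_of_le_of_lt (cu_subset_of_reach hH hy hyw) (cu_ssubset_of_edge hH hvy)

lemma not_self_edge (hH : IsHistory V E) {v : HNode Y} (h : (v, v) ∈ E) : False := by
  cases v with
  | ua => exact hH.1.no_in_ua _ h
  | node ℓ U => exact (cu_ssubset_of_edge hH h).ne rfl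

lemma cu_nonempty_of_mem (hH : IsHistory V E) {v : HNode Y} (hv : v ∈ V)
    (hne : v ≠ HNode.ua) : (cladeUnion v).Nonempty := by
  cases v with
  | ua => exact absurd rfl hne
  | node ℓ U => exact cu_nonempty_part (hH.1.valid _ _ hv)

lemma cu_finite_of_mem (hH : IsHistory V E) {v : HNode Y} (hv : v ∈ V)
    (hne : v ≠ HNode.ua) : (cladeUnion v).Finite := by
  cases v with
  | ua => exact absurd rfl hne
  | node ℓ U => exact cu_finite_part (hH.1.valid _ _ hv)

lemma reach_total_aux (hH : IsHistory V E) :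
    ∀ n : ℕ, ∀ x, x ∈ V → x ≠ HNode.ua → (cladeUnion x).ncard ≤ n →
    ∀ a b, Reach E x a → Reach E x b → (cladeUnion a ∩ cladeUnion b).Nonempty →
    Reach E a b ∨ Reach E b a := by
  intro n
  induction n using Nat.strong_induction_on with
  | _ n ih =>
  intro x hxV hxua hcard a b hra hrb hint
  rcases Relation.ReflTransGen.cases_head hra with rfl | ⟨y, hxy, hya⟩
  · exact Or.inl hrb
  rcases Relation.ReflTransGen.cases_head hrb with rfl | ⟨y', hxy', hy'b⟩
  · exact Or.inr hra
  cases x with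
  | ua => exact absurd rfl hxua
  | node ℓx Ux =>
    have hP : IsPart Ux := hH.1.valid _ _ hxV
    have hy : cladeUnion y ∈ Ux := hH.1.edge_clade _ _ _ hxy
    have hy' : cladeUnion y' ∈ Ux := hH.1.edge_clade _ _ _ hxy'
    by_cases hcu : cladeUnion y = cladeUnion y'
    · obtain ⟨c, _, huniq⟩ := hH.2.2 ℓx Ux hxV (cladeUnion y) hy
      have h1 : y = c := huniq y ⟨hxy, rfl⟩
      have h2 : y' = c := huniq y' ⟨hxy', hcu.symm⟩
      subst h1
      rw [h2] at hy'b
      have hylt : (cladeUnion y).ncard < (cladeUnion (HNode.node ℓx Ux)).ncard :=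
        Set.ncard_lt_ncard (cu_ssubset_of_edge hH hxy) (cu_finite_part hP)
      have hyV : y ∈ V := (hH.1.edge_mem _ hxy).2
      have hyua : y ≠ HNode.ua := snd_ne_ua hH hxy
      exact ih _ (lt_of_lt_of_le hylt hcard) y hyV hyua le_rfl a b hya hy'b hint
    · have hdisj := hP.2.1 _ hy _ hy' hcu
      obtain ⟨z, hz1, hz2⟩ := hint
      have hza : z ∈ cladeUnion y :=
        cu_subset_of_reach hH (snd_ne_ua hH hxy) hya hz1
      have hzb : z ∈ cladeUnion y' :=
        cu_subset_of_reach hH (snd_ne_ua hH hxy') hy'b hz2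
      exact absurd hzb (Set.disjoint_left.1 hdisj hza)

lemma reach_of_ua_edge (hH : IsHistory V E) {r v : HNode Y} (hr : (HNode.ua, r) ∈ E)
    (hv : v ∈ V) (hne : v ≠ HNode.ua) : Reach E r v := by
  rcases Relation.ReflTransGen.cases_head (hH.1.reach_ua v hv) with rfl | ⟨y, h1, h2⟩
  · exact absurd rfl hne
  · obtain ⟨r₀, _, hu⟩ := hH.2.1
    rwa [(hu y h1).trans (hu r hr).symm] at h2

lemma comparable (hH : IsHistory V E) {a b : HNode Y} (ha : a ∈ V) (hb : b ∈ V)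
    (hau : a ≠ HNode.ua) (hbu : b ≠ HNode.ua)
    (hint : (cladeUnion a ∩ cladeUnion b).Nonempty) :
    Reach E a b ∨ Reach E b a := by
  obtain ⟨r, hr, _⟩ := hH.2.1
  have hrV : r ∈ V := (hH.1.edge_mem _ hr).2
  have hrua : r ≠ HNode.ua := snd_ne_ua hH hr
  exact reach_total_aux hH (cladeUnion r).ncard r hrV hrua le_rfl a b
    (reach_of_ua_edge hH hr ha hau) (reach_of_ua_edge hH hr hb hbu) hint

lemma unique_parent (hH : IsHistory V E) {a b v : HNode Y} (h1 : (a, v) ∈ E)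
    (h2 : (b, v) ∈ E) : a = b := by
  have hvua : v ≠ HNode.ua := snd_ne_ua hH h1
  have key : ∀ x y : HNode Y, (x, v) ∈ E → (y, v) ∈ E → x = HNode.ua → y ≠ HNode.ua → False := by
    intro x y hx hy hxu hyu
    subst hxu
    have hyV : y ∈ V := (hH.1.edge_mem _ hy).1
    have hrv : Reach E v y := reach_of_ua_edge hH hx hyV hyu
    have hyne : y ≠ v := by rintro rfl; exact not_self_edge hH hy
    have hss : cladeUnion y ⊂ cladeUnion v := cu_ssubset_of_reach_ne hH hvua hrv hyne
    cases y with
    | ua => exact hyu rfl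
    | node ℓ U => exact hss.not_subset (cu_subset_of_edge hH hy)
  by_cases hau : a = HNode.ua
  · by_cases hbu : b = HNode.ua
    · rw [hau, hbu]
    · exact absurd (key a b h1 h2 hau hbu) not_false
  · by_cases hbu : b = HNode.ua
    · exact absurd (key b a h2 h1 hbu hau) not_false
    · -- both are nodes
      have haV : a ∈ V := (hH.1.edge_mem _ h1).1
      have hbV : b ∈ V := (hH.1.edge_mem _ h2).1
      have hvV : v ∈ V := (hH.1.edge_mem _ h1).2
      have hvne : (cladeUnion v).Nonempty := cu_nonempty_of_mem hH hvV hvua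
      have haux : ∀ x y : HNode Y, (x, v) ∈ E → (y, v) ∈ E → x ≠ HNode.ua → y ≠ HNode.ua →
          Reach E x y → x = y := by
        intro x y hx hy hxu hyu hr
        rcases Relation.ReflTransGen.cases_head hr with rfl | ⟨z, hxz, hzy⟩
        · rfl
        cases x with
        | ua => exact absurd rfl hxu
        | node ℓa Ua =>
          have hPa : IsPart Ua := hH.1.valid _ _ (hH.1.edge_mem _ hx).1
          have hzc : cladeUnion z ∈ Ua := hH.1.edge_clade _ _ _ hxz
          have hvc : cladeUnion v ∈ Ua := hH.1.edge_clade _ _ _ hx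
          have hby : cladeUnion y ⊆ cladeUnion z :=
            cu_subset_of_reach hH (snd_ne_ua hH hxz) hzy
          have hvy : cladeUnion v ⊆ cladeUnion y := by
            cases y with
            | ua => exact absurd rfl hyu
            | node ℓb Ub => exact cu_subset_of_mem (hH.1.edge_clade _ _ _ hy)
          by_cases hcc : cladeUnion v = cladeUnion z
          · -- then cladeUnion y = cladeUnion v
            have hyeq : cladeUnion y = cladeUnion v :=
              Set.Subset.antisymm (by rw [hcc]; exact hby) hvy
            cases y with
            | ua => exact absurd rfl hyu
            | node ℓb Ub =>
              have hPb : IsPart Ub := hH.1.valid _ _ (hH.1.edge_mem _ hy).1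
              have hvb : cladeUnion v ∈ Ub := hH.1.edge_clade _ _ _ hy
              have hUbne : Ub ≠ ∅ := by rintro rfl; exact hvb
              rw [cu_node_of_ne hUbne] at hyeq
              rw [← hyeq] at hvb
              exact absurd hvb hPb.sUnion_not_mem
          · have hdisj := hPa.2.1 _ hvc _ hzc hcc
            obtain ⟨w, hw⟩ := hvne
            exact absurd (hby (hvy hw)) (Set.disjoint_left.1 hdisj hw)
      have hint : (cladeUnion a ∩ cladeUnion b).Nonempty := by
        obtain ⟨w, hw⟩ := hvne
        refine ⟨w, ?_, ?_⟩
        · cases a with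
          | ua => exact absurd rfl hau
          | node ℓ U => exact cu_subset_of_mem (hH.1.edge_clade _ _ _ h1) hw
        · cases b with
          | ua => exact absurd rfl hbu
          | node ℓ U => exact cu_subset_of_mem (hH.1.edge_clade _ _ _ h2) hw
      rcases comparable hH haV hbV hau hbu hint with hr | hr
      · exact haux a b h1 h2 hau hbu hr
      · exact (haux b a h2 h1 hbu hau hr).symm

end HistoryStruct

end CollapseProof


section Finiteness

variable {Y : Type u} {V : Set (HNode Y)} {E : Set (HNode Y × HNode Y)}

lemma finite_reach_aux (hH : IsHistory V E) :
    ∀ n : ℕ, ∀ x, x ∈ V → x ≠ HNode.ua → (cladeUnion x).ncard ≤ n →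
      {w | Reach E x w}.Finite := by
  intro n
  induction n using Nat.strong_induction_on with
  | _ n ih =>
  intro x hxV hxua hcard
  cases x with
  | ua => exact absurd rfl hxua
  | node ℓ U =>
    have hP : IsPart U := hH.1.valid _ _ hxV
    have hchild : {w | (HNode.node ℓ U, w) ∈ E}.Finite := by
      apply Set.Finite.of_finite_image (f := cladeUnion)
      · exact hP.2.2.2.1.subset (by rintro _ ⟨w, hw, rfl⟩; exact hH.1.edge_clade _ _ _ hw)
      · intro y₁ h₁ y₂ h₂ hcu
        obtain ⟨c, _, huniq⟩ := hH.2.2 ℓ U hxV (cladeUnion y₁) (hH.1.edge_clade _ _ _ h₁)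
        exact (huniq y₁ ⟨h₁, rfl⟩).trans (huniq y₂ ⟨h₂, hcu.symm⟩).symm
    have hsub : {w | Reach E (HNode.node ℓ U) w} ⊆
        insert (HNode.node ℓ U) (⋃ y ∈ {w | (HNode.node ℓ U, w) ∈ E}, {w | Reach E y w}) := by
      intro w hw
      rcases Relation.ReflTransGen.cases_head hw with rfl | ⟨y, hxy, hyw⟩
      · exact Set.mem_insert _ _
      · exact Set.mem_insert_of_mem _ (Set.mem_biUnion hxy hyw)
    refine Set.Finite.subset (Set.Finite.insert _ (hchild.biUnion fun y hy => ?_)) hsub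
    have hylt : (cladeUnion y).ncard < (cladeUnion (HNode.node ℓ U)).ncard :=
      Set.ncard_lt_ncard (cu_ssubset_of_edge hH hy) (cu_finite_part hP)
    exact ih _ (lt_of_lt_of_le hylt hcard) y (hH.1.edge_mem _ hy).2 (snd_ne_ua hH hy) le_rfl

lemma V_finite (hH : IsHistory V E) : V.Finite := by
  obtain ⟨r, hr, _⟩ := hH.2.1
  have hrfin : {w | Reach E r w}.Finite :=
    finite_reach_aux hH (cladeUnion r).ncard r (hH.1.edge_mem _ hr).2 (snd_ne_ua hH hr) le_rfl
  refine (hrfin.insert HNode.ua).subset fun v hv => ?_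
  by_cases hvu : v = HNode.ua
  · exact Or.inl hvu
  · exact Or.inr (reach_of_ua_edge hH hr hv hvu)

lemma E_finite (hH : IsHistory V E) : E.Finite :=
  ((V_finite hH).prod (V_finite hH)).subset fun e he =>
    Set.mem_prod.2 ⟨(hH.1.edge_mem e he).1, (hH.1.edge_mem e he).2⟩

end Finiteness


section CollapseSetup

variable {Y : Type u} {V : Set (HNode Y)} {E : Set (HNode Y × HNode Y)}
  {ℓ : Y} {Up Uc : Set (Set Y)}

lemma collapseMap_left {a b n : HNode Y} : collapseMap a b n a = n := by
  simp [collapseMap]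

lemma collapseMap_right {a b n : HNode Y} : collapseMap a b n b = n := by
  simp [collapseMap]

lemma collapseMap_other {a b n v : HNode Y} (h1 : v ≠ a) (h2 : v ≠ b) :
    collapseMap a b n v = v := by
  simp [collapseMap, h1, h2]

lemma part_Up (hH : IsHistory V E) (he : (HNode.node ℓ Up, HNode.node ℓ Uc) ∈ E) :
    IsPart Up := hH.1.valid _ _ (hH.1.edge_mem _ he).1

lemma part_Uc (hH : IsHistory V E) (he : (HNode.node ℓ Up, HNode.node ℓ Uc) ∈ E) :
    IsPart Uc := hH.1.valid _ _ (hH.1.edge_mem _ he).2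

lemma cuC_mem_Up (hH : IsHistory V E) (he : (HNode.node ℓ Up, HNode.node ℓ Uc) ∈ E) :
    cladeUnion (HNode.node ℓ Uc) ∈ Up := hH.1.edge_clade _ _ _ he

lemma cuC_not_mem_Uc (hH : IsHistory V E) (he : (HNode.node ℓ Up, HNode.node ℓ Uc) ∈ E)
    (hUc : Uc ≠ ∅) : cladeUnion (HNode.node ℓ Uc) ∉ Uc := by
  rw [cu_node_of_ne hUc]
  exact (part_Uc hH he).sUnion_not_mem

lemma mem_Uc_ne (hH : IsHistory V E) (he : (HNode.node ℓ Up, HNode.node ℓ Uc) ∈ E)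
    (hUc : Uc ≠ ∅) {D : Set Y} (hD : D ∈ Uc) : D ≠ cladeUnion (HNode.node ℓ Uc) := by
  rintro rfl; exact cuC_not_mem_Uc hH he hUc hD

lemma cuC_ssubset (hH : IsHistory V E) (he : (HNode.node ℓ Up, HNode.node ℓ Uc) ∈ E) :
    cladeUnion (HNode.node ℓ Uc) ⊂ cladeUnion (HNode.node ℓ Up) :=
  cu_ssubset_of_edge hH he

lemma Up_ne_empty (hH : IsHistory V E) (he : (HNode.node ℓ Up, HNode.node ℓ Uc) ∈ E) :
    Up ≠ ∅ := by
  rintro rfl; exact cuC_mem_Up hH he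

lemma newU_ne_empty (hH : IsHistory V E) (he : (HNode.node ℓ Up, HNode.node ℓ Uc) ∈ E)
    (hUc : Uc ≠ ∅) : (Up ∪ Uc) \ {cladeUnion (HNode.node ℓ Uc)} ≠ ∅ := by
  obtain ⟨D, hD⟩ := Set.nonempty_iff_ne_empty.2 hUc
  intro hcon
  have : D ∈ (Up ∪ Uc) \ {cladeUnion (HNode.node ℓ Uc)} :=
    ⟨Or.inr hD, mem_Uc_ne hH he hUc hD⟩
  rw [hcon] at this
  exact this

lemma cu_np (hH : IsHistory V E) (he : (HNode.node ℓ Up, HNode.node ℓ Uc) ∈ E)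
    (hUc : Uc ≠ ∅) :
    cladeUnion (newParent (HNode.node ℓ Up) (HNode.node ℓ Uc))
      = cladeUnion (HNode.node ℓ Up) := by
  rw [newParent_node, cu_node_of_ne (newU_ne_empty hH he hUc),
    cu_node_of_ne (Up_ne_empty hH he)]
  apply Set.Subset.antisymm
  · rintro x ⟨D, ⟨hDU, _⟩, hxD⟩
    rcases hDU with hDp | hDc
    · exact ⟨D, hDp, hxD⟩
    · have : x ∈ cladeUnion (HNode.node ℓ Uc) := cu_subset_of_mem hDc hxD
      rw [cu_node_of_ne hUc] at this
      obtain ⟨D', hD', hxD'⟩ := this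
      have hCC : cladeUnion (HNode.node ℓ Uc) = ⋃₀ Uc := cu_node_of_ne hUc
      have : x ∈ cladeUnion (HNode.node ℓ Uc) := by rw [hCC]; exact ⟨D', hD', hxD'⟩
      exact ⟨_, cuC_mem_Up hH he, this⟩
  · rintro x ⟨D, hD, hxD⟩
    by_cases hDC : D = cladeUnion (HNode.node ℓ Uc)
    · subst hDC
      rw [cu_node_of_ne hUc] at hxD
      obtain ⟨D', hD', hxD'⟩ := hxD
      exact ⟨D', ⟨Or.inr hD', mem_Uc_ne hH he hUc hD'⟩, hxD'⟩
    · exact ⟨D, ⟨Or.inl hD, hDC⟩, hxD⟩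

lemma part_newU (hH : IsHistory V E) (he : (HNode.node ℓ Up, HNode.node ℓ Uc) ∈ E)
    (hUc : Uc ≠ ∅) : IsPart ((Up ∪ Uc) \ {cladeUnion (HNode.node ℓ Uc)}) := by
  have hPp := part_Up hH he
  have hPc := part_Uc hH he
  refine ⟨?_, ?_, ?_, ?_, ?_⟩
  · rintro C ⟨hC, _⟩
    rcases hC with h | h
    · exact hPp.1 C h
    · exact hPc.1 C h
  · rintro C₁ ⟨hC₁, hne₁⟩ C₂ ⟨hC₂, hne₂⟩ hne
    have haux : ∀ D₁ D₂ : Set Y, D₁ ∈ Up → D₁ ≠ cladeUnion (HNode.node ℓ Uc) → D₂ ∈ Uc →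
        Disjoint D₁ D₂ := by
      intro D₁ D₂ h₁ hne₁ h₂
      have hdisj : Disjoint D₁ (cladeUnion (HNode.node ℓ Uc)) :=
        hPp.2.1 D₁ h₁ _ (cuC_mem_Up hH he) hne₁
      exact hdisj.mono_right (cu_subset_of_mem h₂)
    rcases hC₁ with h₁ | h₁ <;> rcases hC₂ with h₂ | h₂
    · exact hPp.2.1 _ h₁ _ h₂ hne
    · exact haux C₁ C₂ h₁ (by simpa using hne₁) h₂
    · exact (haux C₂ C₁ h₂ (by simpa using hne₂) h₁).symm
    · exact hPc.2.1 _ h₁ _ h₂ hne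
  · intro D hcon
    obtain ⟨D₁, hD₁⟩ := Set.nonempty_iff_ne_empty.2 hUc
    obtain ⟨D₂, hD₂, hne⟩ := hPc.exists_ne hD₁
    have m₁ : D₁ ∈ (Up ∪ Uc) \ {cladeUnion (HNode.node ℓ Uc)} :=
      ⟨Or.inr hD₁, mem_Uc_ne hH he hUc hD₁⟩
    have m₂ : D₂ ∈ (Up ∪ Uc) \ {cladeUnion (HNode.node ℓ Uc)} :=
      ⟨Or.inr hD₂, mem_Uc_ne hH he hUc hD₂⟩
    rw [hcon] at m₁ m₂
    exact hne (m₂.trans m₁.symm)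
  · exact (hPp.2.2.2.1.union hPc.2.2.2.1).diff
  · rintro C ⟨hC, _⟩
    rcases hC with h | h
    · exact hPp.2.2.2.2 C h
    · exact hPc.2.2.2.2 C h

lemma np_ne_ua (hH : IsHistory V E) (he : (HNode.node ℓ Up, HNode.node ℓ Uc) ∈ E) :
    newParent (HNode.node ℓ Up) (HNode.node ℓ Uc) ≠ HNode.ua := by
  rw [newParent_node]; exact fun h => nomatch h

lemma np_not_mem (hH : IsHistory V E) (he : (HNode.node ℓ Up, HNode.node ℓ Uc) ∈ E)
    (hUc : Uc ≠ ∅) : newParent (HNode.node ℓ Up) (HNode.node ℓ Uc) ∉ V := by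
  intro hmem
  have hvpV : HNode.node ℓ Up ∈ V := (hH.1.edge_mem _ he).1
  have hnp_ne : newParent (HNode.node ℓ Up) (HNode.node ℓ Uc) ≠ HNode.node ℓ Up := by
    rw [newParent_node]
    intro h
    have hU : (Up ∪ Uc) \ {cladeUnion (HNode.node ℓ Uc)} = Up := by
      injection h
    have := cuC_mem_Up hH he
    rw [← hU] at this
    exact this.2 rfl
  have hcu := cu_np hH he hUc
  have hint : (cladeUnion (newParent (HNode.node ℓ Up) (HNode.node ℓ Uc)) ∩
      cladeUnion (HNode.node ℓ Up)).Nonempty := by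
    rw [hcu, Set.inter_self]
    exact cu_nonempty_part (part_Up hH he)
  rcases comparable hH hmem hvpV (np_ne_ua hH he) (fun h => nomatch h) hint with
    hr | hr
  · exact ((cu_ssubset_of_reach_ne hH (np_ne_ua hH he) hr
      (fun h => hnp_ne h.symm)).ne (by rw [hcu])).elim
  · exact ((cu_ssubset_of_reach_ne hH (fun h : HNode.node ℓ Up = HNode.ua => nomatch h) hr hnp_ne).ne
      (by rw [hcu])).elim

lemma vp_ne_vc (hH : IsHistory V E) (he : (HNode.node ℓ Up, HNode.node ℓ Uc) ∈ E) :
    HNode.node ℓ Up ≠ HNode.node ℓ Uc := by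
  intro h
  rw [h] at he
  exact not_self_edge hH he

lemma vc_vp_not_edge (hH : IsHistory V E) (he : (HNode.node ℓ Up, HNode.node ℓ Uc) ∈ E) :
    (HNode.node ℓ Uc, HNode.node ℓ Up) ∉ E := by
  intro h
  have h1 : cladeUnion (HNode.node ℓ Up) ∈ Uc := hH.1.edge_clade _ _ _ h
  exact (cuC_ssubset hH he).not_subset (cu_subset_of_mem h1)

end CollapseSetup


section CollapseMapFacts

variable {Y : Type u} {V : Set (HNode Y)} {E : Set (HNode Y × HNode Y)}
  {ℓ : Y} {Up Uc : Set (Set Y)}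

lemma np_not_mem' (hH : IsHistory V E) (he : ((HNode.node ℓ Up), (HNode.node ℓ Uc)) ∈ E) (hUc : Uc ≠ ∅) :
    (HNode.node ℓ ((Up ∪ Uc) \ {cladeUnion (HNode.node ℓ Uc)})) ∉ V := by
  have h := np_not_mem hH he hUc
  rwa [newParent_node] at h

lemma cu_np' (hH : IsHistory V E) (he : ((HNode.node ℓ Up), (HNode.node ℓ Uc)) ∈ E) (hUc : Uc ≠ ∅) :
    cladeUnion (HNode.node ℓ ((Up ∪ Uc) \ {cladeUnion (HNode.node ℓ Uc)})) = cladeUnion (HNode.node ℓ Up) := by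
  have h := cu_np hH he hUc
  rwa [newParent_node] at h

lemma reach_image (hH : IsHistory V E) (he : ((HNode.node ℓ Up), (HNode.node ℓ Uc)) ∈ E) (hUc : Uc ≠ ∅)
    {x y : HNode Y} (h : Reach E x y) :
    Reach ((fun e : HNode Y × HNode Y => (collapseMap (HNode.node ℓ Up) (HNode.node ℓ Uc) (HNode.node ℓ ((Up ∪ Uc) \ {cladeUnion (HNode.node ℓ Uc)})) e.1,
        collapseMap (HNode.node ℓ Up) (HNode.node ℓ Uc) (HNode.node ℓ ((Up ∪ Uc) \ {cladeUnion (HNode.node ℓ Uc)})) e.2)) '' (E \ {((HNode.node ℓ Up), (HNode.node ℓ Uc))}))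
      (collapseMap (HNode.node ℓ Up) (HNode.node ℓ Uc) (HNode.node ℓ ((Up ∪ Uc) \ {cladeUnion (HNode.node ℓ Uc)})) x) (collapseMap (HNode.node ℓ Up) (HNode.node ℓ Uc) (HNode.node ℓ ((Up ∪ Uc) \ {cladeUnion (HNode.node ℓ Uc)})) y) := by
  induction h with
  | refl => exact Relation.ReflTransGen.refl
  | tail hr hedge ih =>
    rename_i b c
    by_cases hbc : (b, c) = ((HNode.node ℓ Up), (HNode.node ℓ Uc))
    · rw [Prod.ext_iff] at hbc
      obtain ⟨hb, hc⟩ := hbc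
      subst hb; subst hc
      rw [collapseMap_right]
      rw [collapseMap_left] at ih
      exact ih
    · exact Relation.ReflTransGen.tail ih ⟨(b, c), ⟨hedge, hbc⟩, rfl⟩

lemma q_cases (hH : IsHistory V E) (he : ((HNode.node ℓ Up), (HNode.node ℓ Uc)) ∈ E) (hUc : Uc ≠ ∅)
    {v w : HNode Y} (hv : v ∈ V) (hw : w ∈ V)
    (h : collapseMap (HNode.node ℓ Up) (HNode.node ℓ Uc) (HNode.node ℓ ((Up ∪ Uc) \ {cladeUnion (HNode.node ℓ Uc)})) v = collapseMap (HNode.node ℓ Up) (HNode.node ℓ Uc) (HNode.node ℓ ((Up ∪ Uc) \ {cladeUnion (HNode.node ℓ Uc)})) w) :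
    v = w ∨ (v = (HNode.node ℓ Up) ∧ w = (HNode.node ℓ Uc)) ∨ (v = (HNode.node ℓ Uc) ∧ w = (HNode.node ℓ Up)) := by
  have hnp := np_not_mem' hH he hUc
  by_cases hv1 : v = (HNode.node ℓ Up) ∨ v = (HNode.node ℓ Uc)
  · by_cases hw1 : w = (HNode.node ℓ Up) ∨ w = (HNode.node ℓ Uc)
    · rcases hv1 with rfl | rfl <;> rcases hw1 with rfl | rfl
      · exact Or.inl rfl
      · exact Or.inr (Or.inl ⟨rfl, rfl⟩)
      · exact Or.inr (Or.inr ⟨rfl, rfl⟩)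
      · exact Or.inl rfl
    · push_neg at hw1
      have hv2 : collapseMap (HNode.node ℓ Up) (HNode.node ℓ Uc) (HNode.node ℓ ((Up ∪ Uc) \ {cladeUnion (HNode.node ℓ Uc)})) v = (HNode.node ℓ ((Up ∪ Uc) \ {cladeUnion (HNode.node ℓ Uc)})) := by
        rcases hv1 with rfl | rfl
        · exact collapseMap_left
        · exact collapseMap_right
      rw [hv2, collapseMap_other hw1.1 hw1.2] at h
      exact absurd (h ▸ hw) hnp
  · push_neg at hv1
    by_cases hw1 : w = (HNode.node ℓ Up) ∨ w = (HNode.node ℓ Uc)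
    · have hw2 : collapseMap (HNode.node ℓ Up) (HNode.node ℓ Uc) (HNode.node ℓ ((Up ∪ Uc) \ {cladeUnion (HNode.node ℓ Uc)})) w = (HNode.node ℓ ((Up ∪ Uc) \ {cladeUnion (HNode.node ℓ Uc)})) := by
        rcases hw1 with rfl | rfl
        · exact collapseMap_left
        · exact collapseMap_right
      rw [hw2, collapseMap_other hv1.1 hv1.2] at h
      exact absurd (h.symm ▸ hv) hnp
    · push_neg at hw1
      rw [collapseMap_other hv1.1 hv1.2, collapseMap_other hw1.1 hw1.2] at h
      exact Or.inl h

lemma collapse_edge_inj (hH : IsHistory V E) (he : ((HNode.node ℓ Up), (HNode.node ℓ Uc)) ∈ E) (hUc : Uc ≠ ∅)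
    {a b a' b' : HNode Y}
    (h1 : (a, b) ∈ E) (h1e : (a, b) ≠ ((HNode.node ℓ Up), (HNode.node ℓ Uc)))
    (h2 : (a', b') ∈ E) (h2e : (a', b') ≠ ((HNode.node ℓ Up), (HNode.node ℓ Uc)))
    (hqa : collapseMap (HNode.node ℓ Up) (HNode.node ℓ Uc) (HNode.node ℓ ((Up ∪ Uc) \ {cladeUnion (HNode.node ℓ Uc)})) a = collapseMap (HNode.node ℓ Up) (HNode.node ℓ Uc) (HNode.node ℓ ((Up ∪ Uc) \ {cladeUnion (HNode.node ℓ Uc)})) a')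
    (hqb : collapseMap (HNode.node ℓ Up) (HNode.node ℓ Uc) (HNode.node ℓ ((Up ∪ Uc) \ {cladeUnion (HNode.node ℓ Uc)})) b = collapseMap (HNode.node ℓ Up) (HNode.node ℓ Uc) (HNode.node ℓ ((Up ∪ Uc) \ {cladeUnion (HNode.node ℓ Uc)})) b') :
    a = a' ∧ b = b' := by
  have haV : a ∈ V := (hH.1.edge_mem _ h1).1
  have hbV : b ∈ V := (hH.1.edge_mem _ h1).2
  have haV' : a' ∈ V := (hH.1.edge_mem _ h2).1
  have hbV' : b' ∈ V := (hH.1.edge_mem _ h2).2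
  rcases q_cases hH he hUc haV haV' hqa with rfl | ⟨rfl, rfl⟩ | ⟨rfl, rfl⟩
  · refine ⟨rfl, ?_⟩
    rcases q_cases hH he hUc hbV hbV' hqb with rfl | ⟨rfl, rfl⟩ | ⟨rfl, rfl⟩
    · rfl
    · -- b = VP, b' = VC : a is a parent of VC, so a = VP, contradiction with h2e
      exact absurd (by rw [unique_parent hH h2 he]) h2e
    · exact absurd (by rw [unique_parent hH h1 he]) h1e
  · -- a = VP, a' = VC
    rcases q_cases hH he hUc hbV hbV' hqb with rfl | ⟨rfl, rfl⟩ | ⟨rfl, rfl⟩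
    · exact absurd (unique_parent hH h1 h2) (vp_ne_vc hH he)
    · exact absurd h1 (not_self_edge hH · )
    · exact absurd rfl h1e
  · rcases q_cases hH he hUc hbV hbV' hqb with rfl | ⟨rfl, rfl⟩ | ⟨rfl, rfl⟩
    · exact absurd (unique_parent hH h2 h1) (vp_ne_vc hH he)
    · exact absurd rfl h2e
    · exact absurd h2 (not_self_edge hH · )

end CollapseMapFacts


section CollapseKey

variable {Y : Type u} {V : Set (HNode Y)} {E : Set (HNode Y × HNode Y)}
  {ℓ : Y} {Up Uc : Set (Set Y)}

lemma Up_Uc_disj (hH : IsHistory V E) (he : ((HNode.node ℓ Up), (HNode.node ℓ Uc)) ∈ E) (hUc : Uc ≠ ∅)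
    {D : Set Y} (hDp : D ∈ Up) (hDc : D ∈ Uc) : False := by
  have hsub : D ⊆ cladeUnion (HNode.node ℓ Uc) := cu_subset_of_mem hDc
  have hne : D ≠ cladeUnion (HNode.node ℓ Uc) := mem_Uc_ne hH he hUc hDc
  have hdisj : Disjoint D (cladeUnion (HNode.node ℓ Uc)) :=
    (part_Up hH he).2.1 D hDp _ (cuC_mem_Up hH he) hne
  exact absurd (hdisj.eq_bot_of_le hsub) ((part_Uc hH he).1 D hDc)

lemma collapse_key (hH : IsHistory V E) (he : ((HNode.node ℓ Up), (HNode.node ℓ Uc)) ∈ E) (hUc : Uc ≠ ∅) :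
    ∀ ℓ₀ (U₀ : Set (Set Y)), HNode.node ℓ₀ U₀ ∈ (collapseMap (HNode.node ℓ Up) (HNode.node ℓ Uc) (HNode.node ℓ ((Up ∪ Uc) \ {cladeUnion (HNode.node ℓ Uc)}))) '' V → ∀ D ∈ U₀,
      ∃! w', (HNode.node ℓ₀ U₀, w') ∈
          (fun e : HNode Y × HNode Y => ((collapseMap (HNode.node ℓ Up) (HNode.node ℓ Uc) (HNode.node ℓ ((Up ∪ Uc) \ {cladeUnion (HNode.node ℓ Uc)}))) e.1, (collapseMap (HNode.node ℓ Up) (HNode.node ℓ Uc) (HNode.node ℓ ((Up ∪ Uc) \ {cladeUnion (HNode.node ℓ Uc)}))) e.2)) '' (E \ {((HNode.node ℓ Up), (HNode.node ℓ Uc))}) ∧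
        cladeUnion w' = D := by
  have hvpV : (HNode.node ℓ Up) ∈ V := (hH.1.edge_mem _ he).1
  have hvcV : (HNode.node ℓ Uc) ∈ V := (hH.1.edge_mem _ he).2
  have hnpV := np_not_mem' hH he hUc
  intro ℓ₀ U₀ hmem D hD
  obtain ⟨v, hv, hqv⟩ := hmem
  by_cases hvp : v = (HNode.node ℓ Up) ∨ v = (HNode.node ℓ Uc)
  · -- the collapsed node: HNode.node ℓ₀ U₀ = NP
    have hnp : HNode.node ℓ₀ U₀ = (HNode.node ℓ ((Up ∪ Uc) \ {cladeUnion (HNode.node ℓ Uc)})) := by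
      rcases hvp with rfl | rfl
      · rw [collapseMap_left] at hqv; exact hqv.symm
      · rw [collapseMap_right] at hqv; exact hqv.symm
    injection hnp with hln hUn
    rw [hUn] at hD
    rw [hln, hUn]
    obtain ⟨hD', hDne⟩ := hD
    have hDneC : D ≠ cladeUnion (HNode.node ℓ Uc) := by simpa using hDne
    have huniq_pre : ∀ w', (((HNode.node ℓ ((Up ∪ Uc) \ {cladeUnion (HNode.node ℓ Uc)})), w') ∈
        (fun e : HNode Y × HNode Y => ((collapseMap (HNode.node ℓ Up) (HNode.node ℓ Uc) (HNode.node ℓ ((Up ∪ Uc) \ {cladeUnion (HNode.node ℓ Uc)}))) e.1, (collapseMap (HNode.node ℓ Up) (HNode.node ℓ Uc) (HNode.node ℓ ((Up ∪ Uc) \ {cladeUnion (HNode.node ℓ Uc)}))) e.2)) '' (E \ {((HNode.node ℓ Up), (HNode.node ℓ Uc))}) ∧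
        cladeUnion w' = D) →
        ∃ a, (a = (HNode.node ℓ Up) ∨ a = (HNode.node ℓ Uc)) ∧ (a, w') ∈ E ∧ cladeUnion w' = D := by
      rintro w' ⟨⟨⟨a, b⟩, ⟨habE, habne⟩, heq⟩, hcw'⟩
      simp only [Prod.mk.injEq] at heq
      obtain ⟨ha, hb⟩ := heq
      have haPair : a = (HNode.node ℓ Up) ∨ a = (HNode.node ℓ Uc) := by
        by_contra hcon
        push_neg at hcon
        rw [collapseMap_other hcon.1 hcon.2] at ha
        exact hnpV (ha ▸ (hH.1.edge_mem _ habE).1)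
      have hbvc : b ≠ (HNode.node ℓ Uc) := by
        rintro rfl
        apply habne
        rw [unique_parent hH habE he]
        rfl
      have hbvp : b ≠ (HNode.node ℓ Up) := by
        rintro rfl
        rcases haPair with rfl | rfl
        · exact not_self_edge hH habE
        · exact vc_vp_not_edge hH he habE
      rw [collapseMap_other hbvp hbvc] at hb
      subst hb
      exact ⟨a, haPair, habE, hcw'⟩
    rcases hD' with hDp | hDc
    · obtain ⟨w, ⟨hw, hcw⟩, huniqw⟩ := hH.2.2 ℓ Up hvpV D hDp
      have hwvc : w ≠ (HNode.node ℓ Uc) := by rintro rfl; exact hDneC hcw.symm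
      have hwvp : w ≠ (HNode.node ℓ Up) := by rintro rfl; exact not_self_edge hH hw
      refine ⟨w, ⟨⟨((HNode.node ℓ Up), w), ⟨hw, ?_⟩, ?_⟩, hcw⟩, ?_⟩
      · intro hcon
        simp only [Set.mem_singleton_iff, Prod.mk.injEq] at hcon
        exact hwvc hcon.2
      · show ((collapseMap (HNode.node ℓ Up) (HNode.node ℓ Uc) (HNode.node ℓ ((Up ∪ Uc) \ {cladeUnion (HNode.node ℓ Uc)}))) (HNode.node ℓ Up), (collapseMap (HNode.node ℓ Up) (HNode.node ℓ Uc) (HNode.node ℓ ((Up ∪ Uc) \ {cladeUnion (HNode.node ℓ Uc)}))) w) = _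
        rw [collapseMap_left, collapseMap_other hwvp hwvc]
      · intro w' hw'
        obtain ⟨a, haPair, haE, hcw'⟩ := huniq_pre w' hw'
        rcases haPair with rfl | rfl
        · exact huniqw w' ⟨haE, hcw'⟩
        · exact absurd (hcw' ▸ hH.1.edge_clade _ _ _ haE)
            (fun h => Up_Uc_disj hH he hUc hDp h)
    · obtain ⟨w, ⟨hw, hcw⟩, huniqw⟩ := hH.2.2 ℓ Uc hvcV D hDc
      have hwvc : w ≠ (HNode.node ℓ Uc) := by rintro rfl; exact not_self_edge hH hw
      have hwvp : w ≠ (HNode.node ℓ Up) := by rintro rfl; exact vc_vp_not_edge hH he hw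
      refine ⟨w, ⟨⟨((HNode.node ℓ Uc), w), ⟨hw, ?_⟩, ?_⟩, hcw⟩, ?_⟩
      · intro hcon
        simp only [Set.mem_singleton_iff, Prod.mk.injEq] at hcon
        exact (vp_ne_vc hH he) hcon.1.symm
      · show ((collapseMap (HNode.node ℓ Up) (HNode.node ℓ Uc) (HNode.node ℓ ((Up ∪ Uc) \ {cladeUnion (HNode.node ℓ Uc)}))) (HNode.node ℓ Uc), (collapseMap (HNode.node ℓ Up) (HNode.node ℓ Uc) (HNode.node ℓ ((Up ∪ Uc) \ {cladeUnion (HNode.node ℓ Uc)}))) w) = _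
        rw [collapseMap_right, collapseMap_other hwvp hwvc]
      · intro w' hw'
        obtain ⟨a, haPair, haE, hcw'⟩ := huniq_pre w' hw'
        rcases haPair with rfl | rfl
        · exact absurd (hcw' ▸ hH.1.edge_clade _ _ _ haE)
            (fun h => Up_Uc_disj hH he hUc h hDc)
        · exact huniqw w' ⟨haE, hcw'⟩
  · push_neg at hvp
    rw [collapseMap_other hvp.1 hvp.2] at hqv
    subst hqv
    obtain ⟨w, ⟨hw, hcw⟩, huniqw⟩ := hH.2.2 ℓ₀ U₀ hv D hD
    have hwvc : w ≠ (HNode.node ℓ Uc) := by rintro rfl; exact hvp.1 (unique_parent hH hw he)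
    refine ⟨(collapseMap (HNode.node ℓ Up) (HNode.node ℓ Uc) (HNode.node ℓ ((Up ∪ Uc) \ {cladeUnion (HNode.node ℓ Uc)}))) w, ⟨⟨(HNode.node ℓ₀ U₀, w), ⟨hw, ?_⟩, ?_⟩, ?_⟩, ?_⟩
    · intro hcon
      simp only [Set.mem_singleton_iff, Prod.mk.injEq] at hcon
      exact hvp.1 hcon.1
    · show ((collapseMap (HNode.node ℓ Up) (HNode.node ℓ Uc) (HNode.node ℓ ((Up ∪ Uc) \ {cladeUnion (HNode.node ℓ Uc)}))) (HNode.node ℓ₀ U₀), (collapseMap (HNode.node ℓ Up) (HNode.node ℓ Uc) (HNode.node ℓ ((Up ∪ Uc) \ {cladeUnion (HNode.node ℓ Uc)}))) w) = _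
      rw [collapseMap_other hvp.1 hvp.2]
    · by_cases hwvp : w = (HNode.node ℓ Up)
      · subst hwvp
        rw [collapseMap_left, cu_np' hH he hUc]
        exact hcw
      · rw [collapseMap_other hwvp hwvc]
        exact hcw
    · rintro w' ⟨⟨⟨a, b⟩, ⟨habE, habne⟩, heq⟩, hcw'⟩
      simp only [Prod.mk.injEq] at heq
      obtain ⟨ha, hb⟩ := heq
      have ha' : a = HNode.node ℓ₀ U₀ := by
        by_cases hap : a = (HNode.node ℓ Up) ∨ a = (HNode.node ℓ Uc)
        · exfalso
          have haq : (collapseMap (HNode.node ℓ Up) (HNode.node ℓ Uc) (HNode.node ℓ ((Up ∪ Uc) \ {cladeUnion (HNode.node ℓ Uc)}))) a = (HNode.node ℓ ((Up ∪ Uc) \ {cladeUnion (HNode.node ℓ Uc)})) := by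
            rcases hap with rfl | rfl
            · exact collapseMap_left
            · exact collapseMap_right
          rw [haq] at ha
          exact hnpV (ha ▸ hv)
        · push_neg at hap
          rwa [collapseMap_other hap.1 hap.2] at ha
      subst ha'
      have hbvc : b ≠ (HNode.node ℓ Uc) := by rintro rfl; exact hvp.1 (unique_parent hH habE he)
      have hbcu : cladeUnion b = D := by
        by_cases hbvp : b = (HNode.node ℓ Up)
        · subst hbvp
          rw [collapseMap_left] at hb
          rw [← hb, cu_np' hH he hUc] at hcw'
          exact hcw'
        · rw [collapseMap_other hbvp hbvc] at hb
          rw [hb]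
          exact hcw'
      rw [← hb, huniqw b ⟨habE, hbcu⟩]

end CollapseKey


section CollapseHistory

variable {Y : Type u} {V : Set (HNode Y)} {E : Set (HNode Y × HNode Y)}
  {ℓ : Y} {Up Uc : Set (Set Y)}

lemma collapse_isHistory (hH : IsHistory V E) (he : ((HNode.node ℓ Up), (HNode.node ℓ Uc)) ∈ E) (hUc : Uc ≠ ∅) :
    IsHistory ((collapseMap (HNode.node ℓ Up) (HNode.node ℓ Uc) (HNode.node ℓ ((Up ∪ Uc) \ {cladeUnion (HNode.node ℓ Uc)}))) '' V)
      ((fun e : HNode Y × HNode Y => ((collapseMap (HNode.node ℓ Up) (HNode.node ℓ Uc) (HNode.node ℓ ((Up ∪ Uc) \ {cladeUnion (HNode.node ℓ Uc)}))) e.1, (collapseMap (HNode.node ℓ Up) (HNode.node ℓ Uc) (HNode.node ℓ ((Up ∪ Uc) \ {cladeUnion (HNode.node ℓ Uc)}))) e.2)) '' (E \ {((HNode.node ℓ Up), (HNode.node ℓ Uc))})) := by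
  have hvpV : (HNode.node ℓ Up) ∈ V := (hH.1.edge_mem _ he).1
  have hvcV : (HNode.node ℓ Uc) ∈ V := (hH.1.edge_mem _ he).2
  have hnpV := np_not_mem' hH he hUc
  have hq_ua : (collapseMap (HNode.node ℓ Up) (HNode.node ℓ Uc) (HNode.node ℓ ((Up ∪ Uc) \ {cladeUnion (HNode.node ℓ Uc)}))) HNode.ua = HNode.ua :=
    collapseMap_other (fun h => nomatch h) (fun h => nomatch h)
  have hkey := collapse_key hH he hUc
  refine ⟨⟨?_, ?_, ?_, ?_, ?_, ?_, ?_⟩, ?_, ?_⟩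
  · -- ua_mem
    exact ⟨HNode.ua, hH.1.ua_mem, hq_ua⟩
  · -- valid
    intro ℓ₀ U₀ hmem
    obtain ⟨v, hv, hqv⟩ := hmem
    by_cases hvp : v = (HNode.node ℓ Up) ∨ v = (HNode.node ℓ Uc)
    · have hnp : HNode.node ℓ₀ U₀ = (HNode.node ℓ ((Up ∪ Uc) \ {cladeUnion (HNode.node ℓ Uc)})) := by
        rcases hvp with rfl | rfl
        · rw [collapseMap_left] at hqv; exact hqv.symm
        · rw [collapseMap_right] at hqv; exact hqv.symm
      injection hnp with hln hUn
      rw [hUn]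
      exact part_newU hH he hUc
    · push_neg at hvp
      rw [collapseMap_other hvp.1 hvp.2] at hqv
      subst hqv
      exact hH.1.valid _ _ hv
  · -- edge_mem
    rintro e ⟨⟨a, b⟩, ⟨habE, _⟩, rfl⟩
    exact ⟨⟨a, (hH.1.edge_mem _ habE).1, rfl⟩, ⟨b, (hH.1.edge_mem _ habE).2, rfl⟩⟩
  · -- reach_ua
    rintro v' ⟨v, hv, rfl⟩
    have := reach_image hH he hUc (hH.1.reach_ua v hv)
    rwa [hq_ua] at this
  · -- no_in_ua
    rintro v ⟨⟨a, b⟩, ⟨habE, _⟩, heq⟩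
    simp only [Prod.mk.injEq] at heq
    have hbV : b ∈ V := (hH.1.edge_mem _ habE).2
    have hb : b = HNode.ua := by
      by_cases hbp : b = (HNode.node ℓ Up) ∨ b = (HNode.node ℓ Uc)
      · exfalso
        have : (collapseMap (HNode.node ℓ Up) (HNode.node ℓ Uc) (HNode.node ℓ ((Up ∪ Uc) \ {cladeUnion (HNode.node ℓ Uc)}))) b = (HNode.node ℓ ((Up ∪ Uc) \ {cladeUnion (HNode.node ℓ Uc)})) := by
          rcases hbp with rfl | rfl
          · exact collapseMap_left
          · exact collapseMap_right
        rw [this] at heq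
        exact nomatch heq.2
      · push_neg at hbp
        rw [collapseMap_other hbp.1 hbp.2] at heq
        exact heq.2
    subst hb
    exact hH.1.no_in_ua a habE
  · -- edge_clade
    intro ℓ₀ U₀ w hmem
    obtain ⟨⟨a, b⟩, ⟨habE, habne⟩, heq⟩ := hmem
    simp only [Prod.mk.injEq] at heq
    obtain ⟨ha, hb⟩ := heq
    subst hb
    by_cases hap : a = (HNode.node ℓ Up) ∨ a = (HNode.node ℓ Uc)
    · have haq : (collapseMap (HNode.node ℓ Up) (HNode.node ℓ Uc) (HNode.node ℓ ((Up ∪ Uc) \ {cladeUnion (HNode.node ℓ Uc)}))) a = (HNode.node ℓ ((Up ∪ Uc) \ {cladeUnion (HNode.node ℓ Uc)})) := by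
        rcases hap with rfl | rfl
        · exact collapseMap_left
        · exact collapseMap_right
      rw [haq] at ha
      injection ha.symm with hln hUn
      rw [hUn]
      rcases hap with rfl | rfl
      · -- a = VP
        have hbvc : b ≠ (HNode.node ℓ Uc) := by
          rintro rfl
          exact habne rfl
        have hbvp : b ≠ (HNode.node ℓ Up) := by rintro rfl; exact not_self_edge hH habE
        rw [collapseMap_other hbvp hbvc]
        have hcb : cladeUnion b ∈ Up := hH.1.edge_clade _ _ _ habE
        refine ⟨Or.inl hcb, ?_⟩
        intro hcon
        rw [Set.mem_singleton_iff] at hcon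
        obtain ⟨c, _, huniq⟩ := hH.2.2 ℓ Up hvpV (cladeUnion (HNode.node ℓ Uc)) (cuC_mem_Up hH he)
        have h1 : b = c := huniq b ⟨habE, hcon⟩
        have h2 : (HNode.node ℓ Uc) = c := huniq (HNode.node ℓ Uc) ⟨he, rfl⟩
        exact hbvc (h1.trans h2.symm)
      · -- a = VC
        have hbvp : b ≠ (HNode.node ℓ Up) := by rintro rfl; exact vc_vp_not_edge hH he habE
        have hbvc : b ≠ (HNode.node ℓ Uc) := by rintro rfl; exact not_self_edge hH habE
        rw [collapseMap_other hbvp hbvc]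
        have hcb : cladeUnion b ∈ Uc := hH.1.edge_clade _ _ _ habE
        refine ⟨Or.inr hcb, ?_⟩
        intro hcon
        rw [Set.mem_singleton_iff] at hcon
        rw [hcon] at hcb
        exact cuC_not_mem_Uc hH he hUc hcb
    · push_neg at hap
      rw [collapseMap_other hap.1 hap.2] at ha
      subst ha
      have hcb : cladeUnion b ∈ U₀ := hH.1.edge_clade _ _ _ habE
      have hbvc : b ≠ (HNode.node ℓ Uc) := by
        rintro rfl
        exact hap.1 (unique_parent hH habE he)
      by_cases hbvp : b = (HNode.node ℓ Up)
      · subst hbvp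
        rw [collapseMap_left, cu_np' hH he hUc]
        exact hcb
      · rw [collapseMap_other hbvp hbvc]
        exact hcb
  · -- clade_cov
    intro ℓ₀ U₀ hmem C hC
    obtain ⟨w', hw', _⟩ := hkey ℓ₀ U₀ hmem C hC
    exact ⟨w', hw'.1, hw'.2⟩
  · -- unique ua child
    obtain ⟨r, hr, hu⟩ := hH.2.1
    have hrne : (HNode.ua, r) ≠ ((HNode.node ℓ Up), (HNode.node ℓ Uc)) := by
      intro hcon
      rw [Prod.ext_iff] at hcon
      exact nomatch (hcon.1 : HNode.ua = HNode.node ℓ Up)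
    refine ⟨(collapseMap (HNode.node ℓ Up) (HNode.node ℓ Uc) (HNode.node ℓ ((Up ∪ Uc) \ {cladeUnion (HNode.node ℓ Uc)}))) r, ⟨(HNode.ua, r), ⟨hr, hrne⟩, by show ((collapseMap (HNode.node ℓ Up) (HNode.node ℓ Uc) (HNode.node ℓ ((Up ∪ Uc) \ {cladeUnion (HNode.node ℓ Uc)}))) HNode.ua, (collapseMap (HNode.node ℓ Up) (HNode.node ℓ Uc) (HNode.node ℓ ((Up ∪ Uc) \ {cladeUnion (HNode.node ℓ Uc)}))) r) = _; rw [hq_ua]⟩, ?_⟩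
    rintro w' ⟨⟨a, b⟩, ⟨habE, _⟩, heq⟩
    simp only [Prod.mk.injEq] at heq
    obtain ⟨ha, hb⟩ := heq
    have haV : a ∈ V := (hH.1.edge_mem _ habE).1
    have ha' : a = HNode.ua := by
      by_cases hap : a = (HNode.node ℓ Up) ∨ a = (HNode.node ℓ Uc)
      · exfalso
        have : (collapseMap (HNode.node ℓ Up) (HNode.node ℓ Uc) (HNode.node ℓ ((Up ∪ Uc) \ {cladeUnion (HNode.node ℓ Uc)}))) a = (HNode.node ℓ ((Up ∪ Uc) \ {cladeUnion (HNode.node ℓ Uc)})) := by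
          rcases hap with rfl | rfl
          · exact collapseMap_left
          · exact collapseMap_right
        rw [this] at ha
        exact nomatch ha
      · push_neg at hap
        rwa [collapseMap_other hap.1 hap.2] at ha
    subst ha'
    rw [← hb, hu b habE]
  · -- UniqueDesc
    exact hkey

end CollapseHistory


section StepFacts

variable {Y : Type u}

lemma step_isHistory {t t' : Hist Y} (hH : IsHistory t.1 t.2) (hs : LabelCollapseStep t t') :
    IsHistory t'.1 t'.2 := by
  obtain ⟨ℓ, Up, Uc, he, hUc, rfl⟩ := hs
  simp only [collapseEdgeHist, newParent_node]
  exact collapse_isHistory hH he hUc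

lemma step_card {t t' : Hist Y} (hH : IsHistory t.1 t.2) (hs : LabelCollapseStep t t') :
    t'.2.ncard < t.2.ncard := by
  obtain ⟨ℓ, Up, Uc, he, hUc, rfl⟩ := hs
  have hfin : t.2.Finite := E_finite hH
  calc ((fun e : HNode Y × HNode Y =>
          (collapseMap _ _ _ e.1, collapseMap _ _ _ e.2)) ''
        (t.2 \ {(HNode.node ℓ Up, HNode.node ℓ Uc)})).ncard
      ≤ (t.2 \ {(HNode.node ℓ Up, HNode.node ℓ Uc)}).ncard :=
        Set.ncard_image_le (hfin.diff)
    _ < t.2.ncard := Set.ncard_diff_singleton_lt_of_mem he hfin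

lemma exists_collapsed : ∀ n : ℕ, ∀ t : Hist Y, IsHistory t.1 t.2 → t.2.ncard ≤ n →
    ∃ tc : Hist Y, Relation.ReflTransGen LabelCollapseStep t tc ∧ LabelCollapsed tc ∧
      IsHistory tc.1 tc.2 := by
  intro n
  induction n using Nat.strong_induction_on with
  | _ n ih =>
  intro t hH hcard
  by_cases hc : LabelCollapsed t
  · exact ⟨t, Relation.ReflTransGen.refl, hc, hH⟩
  · rw [LabelCollapsed] at hc
    push_neg at hc
    obtain ⟨ℓ, Up, Uc, he, hUc0⟩ := hc
    have hUc : Uc ≠ ∅ := by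
      first
      | exact hUc0
      | exact Set.nonempty_iff_ne_empty.1 hUc0
    set t' := collapseEdgeHist (HNode.node ℓ Up) (HNode.node ℓ Uc)
      (newParent (HNode.node ℓ Up) (HNode.node ℓ Uc)) t with ht'
    have hstep : LabelCollapseStep t t' := ⟨ℓ, Up, Uc, he, hUc, rfl⟩
    have hH' : IsHistory t'.1 t'.2 := step_isHistory hH hstep
    have hlt : t'.2.ncard < t.2.ncard := step_card hH hstep
    obtain ⟨tc, hr, hcol, hhist⟩ :=
      ih t'.2.ncard (lt_of_lt_of_le hlt hcard) t' hH' le_rfl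
    exact ⟨tc, Relation.ReflTransGen.head hstep hr, hcol, hhist⟩

end StepFacts


section DiamondInfra

variable {Y : Type u} {V : Set (HNode Y)} {E : Set (HNode Y × HNode Y)}
  {ℓ : Y} {Up Uc : Set (Set Y)}

lemma image_diff_edge (hH : IsHistory V E) (he : ((HNode.node ℓ Up), (HNode.node ℓ Uc)) ∈ E) (hUc : Uc ≠ ∅)
    {p₂ c₂ : HNode Y} (he₂ : (p₂, c₂) ∈ E) (hne : (p₂, c₂) ≠ ((HNode.node ℓ Up), (HNode.node ℓ Uc))) :
    ((fun e : HNode Y × HNode Y => ((collapseMap (HNode.node ℓ Up) (HNode.node ℓ Uc) (HNode.node ℓ ((Up ∪ Uc) \ {cladeUnion (HNode.node ℓ Uc)}))) e.1, (collapseMap (HNode.node ℓ Up) (HNode.node ℓ Uc) (HNode.node ℓ ((Up ∪ Uc) \ {cladeUnion (HNode.node ℓ Uc)}))) e.2)) '' (E \ {((HNode.node ℓ Up), (HNode.node ℓ Uc))}))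
        \ {((collapseMap (HNode.node ℓ Up) (HNode.node ℓ Uc) (HNode.node ℓ ((Up ∪ Uc) \ {cladeUnion (HNode.node ℓ Uc)}))) p₂, (collapseMap (HNode.node ℓ Up) (HNode.node ℓ Uc) (HNode.node ℓ ((Up ∪ Uc) \ {cladeUnion (HNode.node ℓ Uc)}))) c₂)}
      = (fun e : HNode Y × HNode Y => ((collapseMap (HNode.node ℓ Up) (HNode.node ℓ Uc) (HNode.node ℓ ((Up ∪ Uc) \ {cladeUnion (HNode.node ℓ Uc)}))) e.1, (collapseMap (HNode.node ℓ Up) (HNode.node ℓ Uc) (HNode.node ℓ ((Up ∪ Uc) \ {cladeUnion (HNode.node ℓ Uc)}))) e.2)) ''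
          ((E \ {((HNode.node ℓ Up), (HNode.node ℓ Uc))}) \ {(p₂, c₂)}) := by
  ext x
  constructor
  · rintro ⟨⟨⟨a, b⟩, ⟨hab, habne⟩, rfl⟩, hx2⟩
    refine ⟨(a, b), ⟨⟨hab, habne⟩, ?_⟩, rfl⟩
    rintro hcon
    rw [Set.mem_singleton_iff] at hcon
    apply hx2
    rw [Set.mem_singleton_iff, hcon]
  · rintro ⟨⟨a, b⟩, ⟨⟨hab, habne⟩, habne2⟩, rfl⟩
    refine ⟨⟨(a, b), ⟨hab, habne⟩, rfl⟩, ?_⟩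
    intro hcon
    rw [Set.mem_singleton_iff, Prod.mk.injEq] at hcon
    obtain ⟨h1, h2⟩ := collapse_edge_inj hH he hUc hab habne he₂ hne hcon.1 hcon.2
    apply habne2
    rw [Set.mem_singleton_iff, Prod.ext_iff]
    exact ⟨h1, h2⟩

lemma collapse_collapse_repr (hH : IsHistory V E) (he : ((HNode.node ℓ Up), (HNode.node ℓ Uc)) ∈ E) (hUc : Uc ≠ ∅)
    {p₂ c₂ X Z n' : HNode Y}
    (he₂ : (p₂, c₂) ∈ E) (hne : (p₂, c₂) ≠ ((HNode.node ℓ Up), (HNode.node ℓ Uc)))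
    (hX : (collapseMap (HNode.node ℓ Up) (HNode.node ℓ Uc) (HNode.node ℓ ((Up ∪ Uc) \ {cladeUnion (HNode.node ℓ Uc)}))) p₂ = X) (hZ : (collapseMap (HNode.node ℓ Up) (HNode.node ℓ Uc) (HNode.node ℓ ((Up ∪ Uc) \ {cladeUnion (HNode.node ℓ Uc)}))) c₂ = Z) :
    collapseEdgeHist X Z n'
        ((collapseMap (HNode.node ℓ Up) (HNode.node ℓ Uc) (HNode.node ℓ ((Up ∪ Uc) \ {cladeUnion (HNode.node ℓ Uc)}))) '' V, (fun e : HNode Y × HNode Y => ((collapseMap (HNode.node ℓ Up) (HNode.node ℓ Uc) (HNode.node ℓ ((Up ∪ Uc) \ {cladeUnion (HNode.node ℓ Uc)}))) e.1, (collapseMap (HNode.node ℓ Up) (HNode.node ℓ Uc) (HNode.node ℓ ((Up ∪ Uc) \ {cladeUnion (HNode.node ℓ Uc)}))) e.2)) '' (E \ {((HNode.node ℓ Up), (HNode.node ℓ Uc))}))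
      = ((fun v => collapseMap X Z n' ((collapseMap (HNode.node ℓ Up) (HNode.node ℓ Uc) (HNode.node ℓ ((Up ∪ Uc) \ {cladeUnion (HNode.node ℓ Uc)}))) v)) '' V,
         (fun e : HNode Y × HNode Y =>
            (collapseMap X Z n' ((collapseMap (HNode.node ℓ Up) (HNode.node ℓ Uc) (HNode.node ℓ ((Up ∪ Uc) \ {cladeUnion (HNode.node ℓ Uc)}))) e.1), collapseMap X Z n' ((collapseMap (HNode.node ℓ Up) (HNode.node ℓ Uc) (HNode.node ℓ ((Up ∪ Uc) \ {cladeUnion (HNode.node ℓ Uc)}))) e.2))) ''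
           ((E \ {((HNode.node ℓ Up), (HNode.node ℓ Uc))}) \ {(p₂, c₂)})) := by
  have hdiff : (fun e : HNode Y × HNode Y => ((collapseMap (HNode.node ℓ Up) (HNode.node ℓ Uc) (HNode.node ℓ ((Up ∪ Uc) \ {cladeUnion (HNode.node ℓ Uc)}))) e.1, (collapseMap (HNode.node ℓ Up) (HNode.node ℓ Uc) (HNode.node ℓ ((Up ∪ Uc) \ {cladeUnion (HNode.node ℓ Uc)}))) e.2)) '' (E \ {((HNode.node ℓ Up), (HNode.node ℓ Uc))})
      \ {(X, Z)} = (fun e : HNode Y × HNode Y => ((collapseMap (HNode.node ℓ Up) (HNode.node ℓ Uc) (HNode.node ℓ ((Up ∪ Uc) \ {cladeUnion (HNode.node ℓ Uc)}))) e.1, (collapseMap (HNode.node ℓ Up) (HNode.node ℓ Uc) (HNode.node ℓ ((Up ∪ Uc) \ {cladeUnion (HNode.node ℓ Uc)}))) e.2)) ''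
        ((E \ {((HNode.node ℓ Up), (HNode.node ℓ Uc))}) \ {(p₂, c₂)}) := by
    rw [← hX, ← hZ]
    exact image_diff_edge hH he hUc he₂ hne
  show (_, _) = (_, _)
  rw [Prod.mk.injEq]
  constructor
  · rw [Set.image_image]
  · show (fun e : HNode Y × HNode Y => (collapseMap X Z n' e.1, collapseMap X Z n' e.2)) ''
        ((fun e : HNode Y × HNode Y => ((collapseMap (HNode.node ℓ Up) (HNode.node ℓ Uc) (HNode.node ℓ ((Up ∪ Uc) \ {cladeUnion (HNode.node ℓ Uc)}))) e.1, (collapseMap (HNode.node ℓ Up) (HNode.node ℓ Uc) (HNode.node ℓ ((Up ∪ Uc) \ {cladeUnion (HNode.node ℓ Uc)}))) e.2)) '' (E \ {((HNode.node ℓ Up), (HNode.node ℓ Uc))}) \ {(X, Z)}) = _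
    rw [hdiff, Set.image_image]

end DiamondInfra

section DiamondInfra2

variable {Y : Type u} {V : Set (HNode Y)} {E : Set (HNode Y × HNode Y)}

lemma repr_eq (hH : IsHistory V E) {f g : HNode Y → HNode Y} (hfg : ∀ v ∈ V, f v = g v)
    {S : Set (HNode Y × HNode Y)} (hS : S ⊆ E) :
    ((f '' V : Set (HNode Y)), (fun e : HNode Y × HNode Y => (f e.1, f e.2)) '' S)
      = (g '' V, (fun e : HNode Y × HNode Y => (g e.1, g e.2)) '' S) := by
  rw [Prod.mk.injEq]
  constructor
  · exact Set.image_congr hfg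
  · apply Set.image_congr
    intro e heS
    have hm := hH.1.edge_mem e (hS heS)
    rw [Prod.mk.injEq]
    exact ⟨hfg _ hm.1, hfg _ hm.2⟩

end DiamondInfra2


section DiamondCaseC

variable {Y : Type u} {V : Set (HNode Y)} {E : Set (HNode Y × HNode Y)}
  {ℓ : Y} {Up Uc Ud : Set (Set Y)}

lemma diamond_sibling (hH : IsHistory V E)
    (he₁ : ((HNode.node ℓ Up), (HNode.node ℓ Uc)) ∈ E) (hUc : Uc ≠ ∅)
    (he₂ : ((HNode.node ℓ Up), (HNode.node ℓ Ud)) ∈ E) (hUd : Ud ≠ ∅)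
    (hne : (HNode.node ℓ Ud) ≠ (HNode.node ℓ Uc)) :
    ∃ u, LabelCollapseStep (collapseEdgeHist (HNode.node ℓ Up) (HNode.node ℓ Uc) (newParent (HNode.node ℓ Up) (HNode.node ℓ Uc)) (V, E)) u ∧
         LabelCollapseStep (collapseEdgeHist (HNode.node ℓ Up) (HNode.node ℓ Ud) (newParent (HNode.node ℓ Up) (HNode.node ℓ Ud)) (V, E)) u := by
  have hDUp : cladeUnion (HNode.node ℓ Ud) ∈ Up := hH.1.edge_clade _ _ _ he₂
  have hCUp : cladeUnion (HNode.node ℓ Uc) ∈ Up := cuC_mem_Up hH he₁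
  have hDC : cladeUnion (HNode.node ℓ Ud) ≠ cladeUnion (HNode.node ℓ Uc) := by
    intro h
    obtain ⟨c, _, huniq⟩ := hH.2.2 ℓ Up (hH.1.edge_mem _ he₁).1 (cladeUnion (HNode.node ℓ Uc)) hCUp
    exact hne ((huniq (HNode.node ℓ Ud) ⟨he₂, h⟩).trans (huniq (HNode.node ℓ Uc) ⟨he₁, rfl⟩).symm)
  have hdisj : Disjoint (cladeUnion (HNode.node ℓ Ud)) (cladeUnion (HNode.node ℓ Uc)) :=
    (part_Up hH he₁).2.1 _ hDUp _ hCUp hDC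
  have hCnotUd : cladeUnion (HNode.node ℓ Uc) ∉ Ud := by
    intro h
    obtain ⟨x, hx⟩ := cu_nonempty_part (part_Uc hH he₁)
    exact Set.disjoint_right.1 hdisj hx (cu_subset_of_mem h hx)
  have hDnotUc : cladeUnion (HNode.node ℓ Ud) ∉ Uc := by
    intro h
    obtain ⟨x, hx⟩ := cu_nonempty_part (part_Uc hH he₂)
    exact Set.disjoint_left.1 hdisj hx (cu_subset_of_mem h hx)
  have hvd_ne_vp : (HNode.node ℓ Ud) ≠ (HNode.node ℓ Up) := by
    intro h; rw [h] at he₂; exact not_self_edge hH he₂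
  have hvc_ne_vp : (HNode.node ℓ Uc) ≠ (HNode.node ℓ Up) := fun h => (vp_ne_vc hH he₁) h.symm
  have hvc_ne_vd : (HNode.node ℓ Uc) ≠ (HNode.node ℓ Ud) := fun h => hne h.symm
  have hnp1V := np_not_mem' hH he₁ hUc
  have hnp2V := np_not_mem' hH he₂ hUd
  have hne₂' : ((HNode.node ℓ Up), (HNode.node ℓ Ud)) ≠ ((HNode.node ℓ Up), (HNode.node ℓ Uc)) := fun h => hne (congrArg Prod.snd h)
  have hne₁' : ((HNode.node ℓ Up), (HNode.node ℓ Uc)) ≠ ((HNode.node ℓ Up), (HNode.node ℓ Ud)) := fun h => hne₂' h.symm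
  have hfinal : HNode.node ℓ ((((Up ∪ Uc) \ {cladeUnion (HNode.node ℓ Uc)}) ∪ Ud) \ {cladeUnion (HNode.node ℓ Ud)})
      = HNode.node ℓ ((((Up ∪ Ud) \ {cladeUnion (HNode.node ℓ Ud)}) ∪ Uc) \ {cladeUnion (HNode.node ℓ Uc)}) := by
    congr 1
    ext x
    have fact1 : x ∈ Ud → x ≠ cladeUnion (HNode.node ℓ Uc) := fun hx h => hCnotUd (h ▸ hx)
    have fact2 : x ∈ Uc → x ≠ cladeUnion (HNode.node ℓ Ud) := fun hx h => hDnotUc (h ▸ hx)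
    simp only [Set.mem_diff, Set.mem_union, Set.mem_singleton_iff]
    tauto
  have hmap : ∀ v ∈ V,
      collapseMap (HNode.node ℓ ((Up ∪ Uc) \ {cladeUnion (HNode.node ℓ Uc)})) (HNode.node ℓ Ud) (newParent (HNode.node ℓ ((Up ∪ Uc) \ {cladeUnion (HNode.node ℓ Uc)})) (HNode.node ℓ Ud))
        (collapseMap (HNode.node ℓ Up) (HNode.node ℓ Uc) (newParent (HNode.node ℓ Up) (HNode.node ℓ Uc)) v)
      = collapseMap (HNode.node ℓ ((Up ∪ Ud) \ {cladeUnion (HNode.node ℓ Ud)})) (HNode.node ℓ Uc) (newParent (HNode.node ℓ ((Up ∪ Ud) \ {cladeUnion (HNode.node ℓ Ud)})) (HNode.node ℓ Uc))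
        (collapseMap (HNode.node ℓ Up) (HNode.node ℓ Ud) (newParent (HNode.node ℓ Up) (HNode.node ℓ Ud)) v) := by
    intro v hv
    simp only [newParent_node]
    by_cases h1 : v = (HNode.node ℓ Up)
    · subst h1
      rw [collapseMap_left, collapseMap_left, collapseMap_left, collapseMap_left]
      exact hfinal
    · by_cases h2 : v = (HNode.node ℓ Uc)
      · subst h2
        rw [collapseMap_right, collapseMap_left, collapseMap_other hvc_ne_vp hvc_ne_vd,
          collapseMap_right]
        exact hfinal
      · by_cases h3 : v = (HNode.node ℓ Ud)
        · subst h3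
          rw [collapseMap_other hvd_ne_vp hne, collapseMap_right, collapseMap_right,
            collapseMap_left]
          exact hfinal
        · have hvnp1 : v ≠ (HNode.node ℓ ((Up ∪ Uc) \ {cladeUnion (HNode.node ℓ Uc)})) := fun h => hnp1V (h ▸ hv)
          have hvnp2 : v ≠ (HNode.node ℓ ((Up ∪ Ud) \ {cladeUnion (HNode.node ℓ Ud)})) := fun h => hnp2V (h ▸ hv)
          rw [collapseMap_other h1 h2, collapseMap_other hvnp1 h3,
            collapseMap_other h1 h3, collapseMap_other hvnp2 h2]
  refine ⟨collapseEdgeHist (HNode.node ℓ ((Up ∪ Uc) \ {cladeUnion (HNode.node ℓ Uc)})) (HNode.node ℓ Ud) (newParent (HNode.node ℓ ((Up ∪ Uc) \ {cladeUnion (HNode.node ℓ Uc)})) (HNode.node ℓ Ud))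
      (collapseEdgeHist (HNode.node ℓ Up) (HNode.node ℓ Uc) (newParent (HNode.node ℓ Up) (HNode.node ℓ Uc)) (V, E)),
    ⟨ℓ, (Up ∪ Uc) \ {cladeUnion (HNode.node ℓ Uc)}, Ud, ?_, hUd, rfl⟩,
    ⟨ℓ, (Up ∪ Ud) \ {cladeUnion (HNode.node ℓ Ud)}, Uc, ?_, hUc, ?_⟩⟩
  · -- (NP1, VD) is an edge of t₁
    refine ⟨((HNode.node ℓ Up), (HNode.node ℓ Ud)), ⟨he₂, by simp only [Set.mem_singleton_iff]; exact hne₂'⟩, ?_⟩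
    simp only [newParent_node]
    show (collapseMap (HNode.node ℓ Up) (HNode.node ℓ Uc) (HNode.node ℓ ((Up ∪ Uc) \ {cladeUnion (HNode.node ℓ Uc)})) (HNode.node ℓ Up), collapseMap (HNode.node ℓ Up) (HNode.node ℓ Uc) (HNode.node ℓ ((Up ∪ Uc) \ {cladeUnion (HNode.node ℓ Uc)})) (HNode.node ℓ Ud)) = _
    rw [collapseMap_left, collapseMap_other hvd_ne_vp hne]
  · -- (NP2, VC) is an edge of t₂
    refine ⟨((HNode.node ℓ Up), (HNode.node ℓ Uc)), ⟨he₁, by simp only [Set.mem_singleton_iff]; exact hne₁'⟩, ?_⟩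
    simp only [newParent_node]
    show (collapseMap (HNode.node ℓ Up) (HNode.node ℓ Ud) (HNode.node ℓ ((Up ∪ Ud) \ {cladeUnion (HNode.node ℓ Ud)})) (HNode.node ℓ Up), collapseMap (HNode.node ℓ Up) (HNode.node ℓ Ud) (HNode.node ℓ ((Up ∪ Ud) \ {cladeUnion (HNode.node ℓ Ud)})) (HNode.node ℓ Uc)) = _
    rw [collapseMap_left, collapseMap_other hvc_ne_vp hvc_ne_vd]
  · -- the two double collapses agree
    have ht₁ : collapseEdgeHist (HNode.node ℓ Up) (HNode.node ℓ Uc) (newParent (HNode.node ℓ Up) (HNode.node ℓ Uc)) (V, E)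
        = (collapseMap (HNode.node ℓ Up) (HNode.node ℓ Uc) (newParent (HNode.node ℓ Up) (HNode.node ℓ Uc)) '' V,
           (fun e : HNode Y × HNode Y => (collapseMap (HNode.node ℓ Up) (HNode.node ℓ Uc) (newParent (HNode.node ℓ Up) (HNode.node ℓ Uc)) e.1,
              collapseMap (HNode.node ℓ Up) (HNode.node ℓ Uc) (newParent (HNode.node ℓ Up) (HNode.node ℓ Uc)) e.2)) '' (E \ {((HNode.node ℓ Up), (HNode.node ℓ Uc))})) := rfl
    have ht₂ : collapseEdgeHist (HNode.node ℓ Up) (HNode.node ℓ Ud) (newParent (HNode.node ℓ Up) (HNode.node ℓ Ud)) (V, E)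
        = (collapseMap (HNode.node ℓ Up) (HNode.node ℓ Ud) (newParent (HNode.node ℓ Up) (HNode.node ℓ Ud)) '' V,
           (fun e : HNode Y × HNode Y => (collapseMap (HNode.node ℓ Up) (HNode.node ℓ Ud) (newParent (HNode.node ℓ Up) (HNode.node ℓ Ud)) e.1,
              collapseMap (HNode.node ℓ Up) (HNode.node ℓ Ud) (newParent (HNode.node ℓ Up) (HNode.node ℓ Ud)) e.2)) '' (E \ {((HNode.node ℓ Up), (HNode.node ℓ Ud))})) := rfl
    rw [ht₁, ht₂]
    simp only [newParent_node]
    rw [collapse_collapse_repr hH he₁ hUc he₂ hne₂' collapseMap_left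
        (collapseMap_other hvd_ne_vp hne),
      collapse_collapse_repr hH he₂ hUd he₁ hne₁' collapseMap_left
        (collapseMap_other hvc_ne_vp hvc_ne_vd)]
    rw [Set.diff_diff_comm]
    exact (repr_eq hH (by
        intro v hv
        have := (hmap v hv).symm
        simpa only [newParent_node] using this)
      (fun e he' => he'.1.1)).symm

end DiamondCaseC


section DiamondCaseA

variable {Y : Type u} {V : Set (HNode Y)} {E : Set (HNode Y × HNode Y)}
  {ℓ : Y} {Ug Up Uc : Set (Set Y)}

lemma diamond_grandparent (hH : IsHistory V E)
    (he₁ : ((HNode.node ℓ Up), (HNode.node ℓ Uc)) ∈ E) (hUc : Uc ≠ ∅)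
    (he₂ : ((HNode.node ℓ Ug), (HNode.node ℓ Up)) ∈ E) (hUp : Up ≠ ∅) :
    ∃ u, LabelCollapseStep (collapseEdgeHist (HNode.node ℓ Up) (HNode.node ℓ Uc) (newParent (HNode.node ℓ Up) (HNode.node ℓ Uc)) (V, E)) u ∧
         LabelCollapseStep (collapseEdgeHist (HNode.node ℓ Ug) (HNode.node ℓ Up) (newParent (HNode.node ℓ Ug) (HNode.node ℓ Up)) (V, E)) u := by
  have hgp : (HNode.node ℓ Ug) ≠ (HNode.node ℓ Up) := by
    intro h; rw [h] at he₂; exact not_self_edge hH he₂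
  have hgc : (HNode.node ℓ Ug) ≠ (HNode.node ℓ Uc) := by
    intro h; rw [h] at he₂; exact vc_vp_not_edge hH he₁ he₂
  have hvc_ne_vp : (HNode.node ℓ Uc) ≠ (HNode.node ℓ Up) := fun h => (vp_ne_vc hH he₁) h.symm
  have hvc_ne_vg : (HNode.node ℓ Uc) ≠ (HNode.node ℓ Ug) := fun h => hgc h.symm
  have hnp1V := np_not_mem' hH he₁ hUc
  have hnpgV := np_not_mem' hH he₂ hUp
  have hne₂' : ((HNode.node ℓ Ug), (HNode.node ℓ Up)) ≠ ((HNode.node ℓ Up), (HNode.node ℓ Uc)) := fun h => hgp (congrArg Prod.fst h)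
  have hne₁' : ((HNode.node ℓ Up), (HNode.node ℓ Uc)) ≠ ((HNode.node ℓ Ug), (HNode.node ℓ Up)) := fun h => hne₂' h.symm
  have hCssP : cladeUnion (HNode.node ℓ Uc) ⊂ cladeUnion (HNode.node ℓ Up) := cuC_ssubset hH he₁
  have hPUg : cladeUnion (HNode.node ℓ Up) ∈ Ug := cuC_mem_Up hH he₂
  have hC1notUg : cladeUnion (HNode.node ℓ Uc) ∉ Ug := by
    intro h
    have hne' : cladeUnion (HNode.node ℓ Uc) ≠ cladeUnion (HNode.node ℓ Up) := hCssP.ne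
    have hdisj := (part_Up hH he₂).2.1 _ h _ hPUg hne'
    obtain ⟨x, hx⟩ := cu_nonempty_part (part_Uc hH he₁)
    exact Set.disjoint_left.1 hdisj hx (hCssP.1 hx)
  have hPnotUc : cladeUnion (HNode.node ℓ Up) ∉ Uc := by
    intro h
    exact hCssP.not_subset (cu_subset_of_mem h)
  have hfinal : HNode.node ℓ ((Ug ∪ ((Up ∪ Uc) \ {cladeUnion (HNode.node ℓ Uc)})) \ {cladeUnion (HNode.node ℓ ((Up ∪ Uc) \ {cladeUnion (HNode.node ℓ Uc)}))})
      = HNode.node ℓ ((((Ug ∪ Up) \ {cladeUnion (HNode.node ℓ Up)}) ∪ Uc) \ {cladeUnion (HNode.node ℓ Uc)}) := by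
    rw [cu_np' hH he₁ hUc]
    congr 1
    ext x
    have fact1 : x ∈ Ug → x ≠ cladeUnion (HNode.node ℓ Uc) := fun hx h => hC1notUg (h ▸ hx)
    have fact2 : x ∈ Uc → x ≠ cladeUnion (HNode.node ℓ Up) := fun hx h => hPnotUc (h ▸ hx)
    simp only [Set.mem_diff, Set.mem_union, Set.mem_singleton_iff]
    tauto
  have hmap : ∀ v ∈ V,
      collapseMap (HNode.node ℓ Ug) (HNode.node ℓ ((Up ∪ Uc) \ {cladeUnion (HNode.node ℓ Uc)})) (newParent (HNode.node ℓ Ug) (HNode.node ℓ ((Up ∪ Uc) \ {cladeUnion (HNode.node ℓ Uc)})))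
        (collapseMap (HNode.node ℓ Up) (HNode.node ℓ Uc) (newParent (HNode.node ℓ Up) (HNode.node ℓ Uc)) v)
      = collapseMap (HNode.node ℓ ((Ug ∪ Up) \ {cladeUnion (HNode.node ℓ Up)})) (HNode.node ℓ Uc) (newParent (HNode.node ℓ ((Ug ∪ Up) \ {cladeUnion (HNode.node ℓ Up)})) (HNode.node ℓ Uc))
        (collapseMap (HNode.node ℓ Ug) (HNode.node ℓ Up) (newParent (HNode.node ℓ Ug) (HNode.node ℓ Up)) v) := by
    intro v hv
    simp only [newParent_node]
    by_cases h1 : v = (HNode.node ℓ Ug)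
    · subst h1
      rw [collapseMap_other hgp hgc, collapseMap_left, collapseMap_left, collapseMap_left]
      exact hfinal
    · by_cases h2 : v = (HNode.node ℓ Up)
      · subst h2
        rw [collapseMap_left, collapseMap_right, collapseMap_right, collapseMap_left]
        exact hfinal
      · by_cases h3 : v = (HNode.node ℓ Uc)
        · subst h3
          rw [collapseMap_right, collapseMap_right, collapseMap_other hvc_ne_vg hvc_ne_vp,
            collapseMap_right]
          exact hfinal
        · have hvnp1 : v ≠ (HNode.node ℓ ((Up ∪ Uc) \ {cladeUnion (HNode.node ℓ Uc)})) := fun h => hnp1V (h ▸ hv)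
          have hvnpg : v ≠ (HNode.node ℓ ((Ug ∪ Up) \ {cladeUnion (HNode.node ℓ Up)})) := fun h => hnpgV (h ▸ hv)
          rw [collapseMap_other h2 h3, collapseMap_other h1 hvnp1,
            collapseMap_other h1 h2, collapseMap_other hvnpg h3]
  refine ⟨collapseEdgeHist (HNode.node ℓ Ug) (HNode.node ℓ ((Up ∪ Uc) \ {cladeUnion (HNode.node ℓ Uc)})) (newParent (HNode.node ℓ Ug) (HNode.node ℓ ((Up ∪ Uc) \ {cladeUnion (HNode.node ℓ Uc)})))
      (collapseEdgeHist (HNode.node ℓ Up) (HNode.node ℓ Uc) (newParent (HNode.node ℓ Up) (HNode.node ℓ Uc)) (V, E)),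
    ⟨ℓ, Ug, (Up ∪ Uc) \ {cladeUnion (HNode.node ℓ Uc)}, ?_, newU_ne_empty hH he₁ hUc, rfl⟩,
    ⟨ℓ, (Ug ∪ Up) \ {cladeUnion (HNode.node ℓ Up)}, Uc, ?_, hUc, ?_⟩⟩
  · refine ⟨((HNode.node ℓ Ug), (HNode.node ℓ Up)), ⟨he₂, by simp only [Set.mem_singleton_iff]; exact hne₂'⟩, ?_⟩
    simp only [newParent_node]
    show (collapseMap (HNode.node ℓ Up) (HNode.node ℓ Uc) (HNode.node ℓ ((Up ∪ Uc) \ {cladeUnion (HNode.node ℓ Uc)})) (HNode.node ℓ Ug), collapseMap (HNode.node ℓ Up) (HNode.node ℓ Uc) (HNode.node ℓ ((Up ∪ Uc) \ {cladeUnion (HNode.node ℓ Uc)})) (HNode.node ℓ Up)) = _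
    rw [collapseMap_other hgp hgc, collapseMap_left]
  · refine ⟨((HNode.node ℓ Up), (HNode.node ℓ Uc)), ⟨he₁, by simp only [Set.mem_singleton_iff]; exact hne₁'⟩, ?_⟩
    simp only [newParent_node]
    show (collapseMap (HNode.node ℓ Ug) (HNode.node ℓ Up) (HNode.node ℓ ((Ug ∪ Up) \ {cladeUnion (HNode.node ℓ Up)})) (HNode.node ℓ Up), collapseMap (HNode.node ℓ Ug) (HNode.node ℓ Up) (HNode.node ℓ ((Ug ∪ Up) \ {cladeUnion (HNode.node ℓ Up)})) (HNode.node ℓ Uc)) = _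
    rw [collapseMap_right, collapseMap_other hvc_ne_vg hvc_ne_vp]
  · have ht₁ : collapseEdgeHist (HNode.node ℓ Up) (HNode.node ℓ Uc) (newParent (HNode.node ℓ Up) (HNode.node ℓ Uc)) (V, E)
        = (collapseMap (HNode.node ℓ Up) (HNode.node ℓ Uc) (newParent (HNode.node ℓ Up) (HNode.node ℓ Uc)) '' V,
           (fun e : HNode Y × HNode Y => (collapseMap (HNode.node ℓ Up) (HNode.node ℓ Uc) (newParent (HNode.node ℓ Up) (HNode.node ℓ Uc)) e.1,
              collapseMap (HNode.node ℓ Up) (HNode.node ℓ Uc) (newParent (HNode.node ℓ Up) (HNode.node ℓ Uc)) e.2)) '' (E \ {((HNode.node ℓ Up), (HNode.node ℓ Uc))})) := rfl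
    have ht₂ : collapseEdgeHist (HNode.node ℓ Ug) (HNode.node ℓ Up) (newParent (HNode.node ℓ Ug) (HNode.node ℓ Up)) (V, E)
        = (collapseMap (HNode.node ℓ Ug) (HNode.node ℓ Up) (newParent (HNode.node ℓ Ug) (HNode.node ℓ Up)) '' V,
           (fun e : HNode Y × HNode Y => (collapseMap (HNode.node ℓ Ug) (HNode.node ℓ Up) (newParent (HNode.node ℓ Ug) (HNode.node ℓ Up)) e.1,
              collapseMap (HNode.node ℓ Ug) (HNode.node ℓ Up) (newParent (HNode.node ℓ Ug) (HNode.node ℓ Up)) e.2)) '' (E \ {((HNode.node ℓ Ug), (HNode.node ℓ Up))})) := rfl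
    rw [ht₁, ht₂]
    simp only [newParent_node]
    rw [collapse_collapse_repr hH he₁ hUc he₂ hne₂'
        (collapseMap_other hgp hgc) collapseMap_left,
      collapse_collapse_repr hH he₂ hUp he₁ hne₁'
        collapseMap_right (collapseMap_other hvc_ne_vg hvc_ne_vp)]
    rw [Set.diff_diff_comm]
    exact (repr_eq hH (by
        intro v hv
        have := (hmap v hv).symm
        simpa only [newParent_node] using this)
      (fun e he' => he'.1.1)).symm

end DiamondCaseA

section DiamondCaseB

variable {Y : Type u} {V : Set (HNode Y)} {E : Set (HNode Y × HNode Y)}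
  {ℓ : Y} {Up Uc Ud : Set (Set Y)}

lemma diamond_child (hH : IsHistory V E)
    (he₁ : ((HNode.node ℓ Up), (HNode.node ℓ Uc)) ∈ E) (hUc : Uc ≠ ∅)
    (he₂ : ((HNode.node ℓ Uc), (HNode.node ℓ Ud)) ∈ E) (hUd : Ud ≠ ∅) :
    ∃ u, LabelCollapseStep (collapseEdgeHist (HNode.node ℓ Up) (HNode.node ℓ Uc) (newParent (HNode.node ℓ Up) (HNode.node ℓ Uc)) (V, E)) u ∧
         LabelCollapseStep (collapseEdgeHist (HNode.node ℓ Uc) (HNode.node ℓ Ud) (newParent (HNode.node ℓ Uc) (HNode.node ℓ Ud)) (V, E)) u := by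
  have hvd_ne_vp : (HNode.node ℓ Ud) ≠ (HNode.node ℓ Up) := by
    intro h; rw [h] at he₂; exact vc_vp_not_edge hH he₁ he₂
  have hvd_ne_vc : (HNode.node ℓ Ud) ≠ (HNode.node ℓ Uc) := by
    intro h; rw [h] at he₂; exact not_self_edge hH he₂
  have hvp_ne_vc : (HNode.node ℓ Up) ≠ (HNode.node ℓ Uc) := vp_ne_vc hH he₁
  have hvp_ne_vd : (HNode.node ℓ Up) ≠ (HNode.node ℓ Ud) := fun h => hvd_ne_vp h.symm
  have hvc_ne_vd : (HNode.node ℓ Uc) ≠ (HNode.node ℓ Ud) := fun h => hvd_ne_vc h.symm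
  have hnp1V := np_not_mem' hH he₁ hUc
  have hnpcV := np_not_mem' hH he₂ hUd
  have hne₂' : ((HNode.node ℓ Uc), (HNode.node ℓ Ud)) ≠ ((HNode.node ℓ Up), (HNode.node ℓ Uc)) := fun h =>
    hvp_ne_vc (congrArg Prod.fst h).symm
  have hne₁' : ((HNode.node ℓ Up), (HNode.node ℓ Uc)) ≠ ((HNode.node ℓ Uc), (HNode.node ℓ Ud)) := fun h => hne₂' h.symm
  have hDUc : cladeUnion (HNode.node ℓ Ud) ∈ Uc := hH.1.edge_clade _ _ _ he₂
  have hDneC : cladeUnion (HNode.node ℓ Ud) ≠ cladeUnion (HNode.node ℓ Uc) := mem_Uc_ne hH he₁ hUc hDUc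
  have hDsubC : cladeUnion (HNode.node ℓ Ud) ⊆ cladeUnion (HNode.node ℓ Uc) := cu_subset_of_mem hDUc
  have hC1notUd : cladeUnion (HNode.node ℓ Uc) ∉ Ud := by
    intro h
    exact hDneC (Set.Subset.antisymm hDsubC (cu_subset_of_mem h))
  have hDnotUp : cladeUnion (HNode.node ℓ Ud) ∉ Up := by
    intro h
    have hdisj := (part_Up hH he₁).2.1 _ h _ (cuC_mem_Up hH he₁) hDneC
    obtain ⟨x, hx⟩ := cu_nonempty_part (part_Uc hH he₂)
    exact Set.disjoint_left.1 hdisj hx (hDsubC hx)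
  have hfinal : HNode.node ℓ ((((Up ∪ Uc) \ {cladeUnion (HNode.node ℓ Uc)}) ∪ Ud) \ {cladeUnion (HNode.node ℓ Ud)})
      = HNode.node ℓ ((Up ∪ ((Uc ∪ Ud) \ {cladeUnion (HNode.node ℓ Ud)})) \ {cladeUnion (HNode.node ℓ ((Uc ∪ Ud) \ {cladeUnion (HNode.node ℓ Ud)}))}) := by
    rw [cu_np' hH he₂ hUd]
    congr 1
    ext x
    have fact1 : x ∈ Ud → x ≠ cladeUnion (HNode.node ℓ Uc) := fun hx h => hC1notUd (h ▸ hx)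
    have fact2 : x ∈ Up → x ≠ cladeUnion (HNode.node ℓ Ud) := fun hx h => hDnotUp (h ▸ hx)
    simp only [Set.mem_diff, Set.mem_union, Set.mem_singleton_iff]
    tauto
  have hmap : ∀ v ∈ V,
      collapseMap (HNode.node ℓ ((Up ∪ Uc) \ {cladeUnion (HNode.node ℓ Uc)})) (HNode.node ℓ Ud) (newParent (HNode.node ℓ ((Up ∪ Uc) \ {cladeUnion (HNode.node ℓ Uc)})) (HNode.node ℓ Ud))
        (collapseMap (HNode.node ℓ Up) (HNode.node ℓ Uc) (newParent (HNode.node ℓ Up) (HNode.node ℓ Uc)) v)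
      = collapseMap (HNode.node ℓ Up) (HNode.node ℓ ((Uc ∪ Ud) \ {cladeUnion (HNode.node ℓ Ud)})) (newParent (HNode.node ℓ Up) (HNode.node ℓ ((Uc ∪ Ud) \ {cladeUnion (HNode.node ℓ Ud)})))
        (collapseMap (HNode.node ℓ Uc) (HNode.node ℓ Ud) (newParent (HNode.node ℓ Uc) (HNode.node ℓ Ud)) v) := by
    intro v hv
    simp only [newParent_node]
    by_cases h1 : v = (HNode.node ℓ Up)
    · subst h1
      rw [collapseMap_left, collapseMap_left, collapseMap_other hvp_ne_vc hvp_ne_vd,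
        collapseMap_left]
      exact hfinal
    · by_cases h2 : v = (HNode.node ℓ Uc)
      · subst h2
        rw [collapseMap_right, collapseMap_left, collapseMap_left, collapseMap_right]
        exact hfinal
      · by_cases h3 : v = (HNode.node ℓ Ud)
        · subst h3
          rw [collapseMap_other hvd_ne_vp hvd_ne_vc, collapseMap_right, collapseMap_right,
            collapseMap_right]
          exact hfinal
        · have hvnp1 : v ≠ (HNode.node ℓ ((Up ∪ Uc) \ {cladeUnion (HNode.node ℓ Uc)})) := fun h => hnp1V (h ▸ hv)
          have hvnpc : v ≠ (HNode.node ℓ ((Uc ∪ Ud) \ {cladeUnion (HNode.node ℓ Ud)})) := fun h => hnpcV (h ▸ hv)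
          rw [collapseMap_other h1 h2, collapseMap_other hvnp1 h3,
            collapseMap_other h2 h3, collapseMap_other h1 hvnpc]
  refine ⟨collapseEdgeHist (HNode.node ℓ ((Up ∪ Uc) \ {cladeUnion (HNode.node ℓ Uc)})) (HNode.node ℓ Ud) (newParent (HNode.node ℓ ((Up ∪ Uc) \ {cladeUnion (HNode.node ℓ Uc)})) (HNode.node ℓ Ud))
      (collapseEdgeHist (HNode.node ℓ Up) (HNode.node ℓ Uc) (newParent (HNode.node ℓ Up) (HNode.node ℓ Uc)) (V, E)),
    ⟨ℓ, (Up ∪ Uc) \ {cladeUnion (HNode.node ℓ Uc)}, Ud, ?_, hUd, rfl⟩,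
    ⟨ℓ, Up, (Uc ∪ Ud) \ {cladeUnion (HNode.node ℓ Ud)}, ?_, newU_ne_empty hH he₂ hUd, ?_⟩⟩
  · refine ⟨((HNode.node ℓ Uc), (HNode.node ℓ Ud)), ⟨he₂, by simp only [Set.mem_singleton_iff]; exact hne₂'⟩, ?_⟩
    simp only [newParent_node]
    show (collapseMap (HNode.node ℓ Up) (HNode.node ℓ Uc) (HNode.node ℓ ((Up ∪ Uc) \ {cladeUnion (HNode.node ℓ Uc)})) (HNode.node ℓ Uc), collapseMap (HNode.node ℓ Up) (HNode.node ℓ Uc) (HNode.node ℓ ((Up ∪ Uc) \ {cladeUnion (HNode.node ℓ Uc)})) (HNode.node ℓ Ud)) = _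
    rw [collapseMap_right, collapseMap_other hvd_ne_vp hvd_ne_vc]
  · refine ⟨((HNode.node ℓ Up), (HNode.node ℓ Uc)), ⟨he₁, by simp only [Set.mem_singleton_iff]; exact hne₁'⟩, ?_⟩
    simp only [newParent_node]
    show (collapseMap (HNode.node ℓ Uc) (HNode.node ℓ Ud) (HNode.node ℓ ((Uc ∪ Ud) \ {cladeUnion (HNode.node ℓ Ud)})) (HNode.node ℓ Up), collapseMap (HNode.node ℓ Uc) (HNode.node ℓ Ud) (HNode.node ℓ ((Uc ∪ Ud) \ {cladeUnion (HNode.node ℓ Ud)})) (HNode.node ℓ Uc)) = _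
    rw [collapseMap_other hvp_ne_vc hvp_ne_vd, collapseMap_left]
  · have ht₁ : collapseEdgeHist (HNode.node ℓ Up) (HNode.node ℓ Uc) (newParent (HNode.node ℓ Up) (HNode.node ℓ Uc)) (V, E)
        = (collapseMap (HNode.node ℓ Up) (HNode.node ℓ Uc) (newParent (HNode.node ℓ Up) (HNode.node ℓ Uc)) '' V,
           (fun e : HNode Y × HNode Y => (collapseMap (HNode.node ℓ Up) (HNode.node ℓ Uc) (newParent (HNode.node ℓ Up) (HNode.node ℓ Uc)) e.1,
              collapseMap (HNode.node ℓ Up) (HNode.node ℓ Uc) (newParent (HNode.node ℓ Up) (HNode.node ℓ Uc)) e.2)) '' (E \ {((HNode.node ℓ Up), (HNode.node ℓ Uc))})) := rfl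
    have ht₂ : collapseEdgeHist (HNode.node ℓ Uc) (HNode.node ℓ Ud) (newParent (HNode.node ℓ Uc) (HNode.node ℓ Ud)) (V, E)
        = (collapseMap (HNode.node ℓ Uc) (HNode.node ℓ Ud) (newParent (HNode.node ℓ Uc) (HNode.node ℓ Ud)) '' V,
           (fun e : HNode Y × HNode Y => (collapseMap (HNode.node ℓ Uc) (HNode.node ℓ Ud) (newParent (HNode.node ℓ Uc) (HNode.node ℓ Ud)) e.1,
              collapseMap (HNode.node ℓ Uc) (HNode.node ℓ Ud) (newParent (HNode.node ℓ Uc) (HNode.node ℓ Ud)) e.2)) '' (E \ {((HNode.node ℓ Uc), (HNode.node ℓ Ud))})) := rfl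
    rw [ht₁, ht₂]
    simp only [newParent_node]
    rw [collapse_collapse_repr hH he₁ hUc he₂ hne₂'
        collapseMap_right (collapseMap_other hvd_ne_vp hvd_ne_vc),
      collapse_collapse_repr hH he₂ hUd he₁ hne₁'
        (collapseMap_other hvp_ne_vc hvp_ne_vd) collapseMap_left]
    rw [Set.diff_diff_comm]
    exact (repr_eq hH (by
        intro v hv
        have := (hmap v hv).symm
        simpa only [newParent_node] using this)
      (fun e he' => he'.1.1)).symm

end DiamondCaseB

section DiamondCaseD

variable {Y : Type u} {V : Set (HNode Y)} {E : Set (HNode Y × HNode Y)}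
  {ℓ ℓ' : Y} {Up Uc Up' Uc' : Set (Set Y)}

lemma diamond_disjoint (hH : IsHistory V E)
    (he₁ : ((HNode.node ℓ Up), (HNode.node ℓ Uc)) ∈ E) (hUc : Uc ≠ ∅)
    (he₂ : ((HNode.node ℓ' Up'), (HNode.node ℓ' Uc')) ∈ E) (hUc' : Uc' ≠ ∅)
    (h1 : (HNode.node ℓ' Up') ≠ (HNode.node ℓ Up)) (h2 : (HNode.node ℓ' Up') ≠ (HNode.node ℓ Uc)) (h3 : (HNode.node ℓ' Uc') ≠ (HNode.node ℓ Up)) (h4 : (HNode.node ℓ' Uc') ≠ (HNode.node ℓ Uc)) :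
    ∃ u, LabelCollapseStep (collapseEdgeHist (HNode.node ℓ Up) (HNode.node ℓ Uc) (newParent (HNode.node ℓ Up) (HNode.node ℓ Uc)) (V, E)) u ∧
         LabelCollapseStep (collapseEdgeHist (HNode.node ℓ' Up') (HNode.node ℓ' Uc') (newParent (HNode.node ℓ' Up') (HNode.node ℓ' Uc')) (V, E)) u := by
  have h1' : (HNode.node ℓ Up) ≠ (HNode.node ℓ' Up') := fun h => h1 h.symm
  have h2' : (HNode.node ℓ Uc) ≠ (HNode.node ℓ' Up') := fun h => h2 h.symm
  have h3' : (HNode.node ℓ Up) ≠ (HNode.node ℓ' Uc') := fun h => h3 h.symm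
  have h4' : (HNode.node ℓ Uc) ≠ (HNode.node ℓ' Uc') := fun h => h4 h.symm
  have hnp1V := np_not_mem' hH he₁ hUc
  have hnp2V := np_not_mem' hH he₂ hUc'
  have hvp2V : (HNode.node ℓ' Up') ∈ V := (hH.1.edge_mem _ he₂).1
  have hvc2V : (HNode.node ℓ' Uc') ∈ V := (hH.1.edge_mem _ he₂).2
  have hvpV : (HNode.node ℓ Up) ∈ V := (hH.1.edge_mem _ he₁).1
  have hvcV : (HNode.node ℓ Uc) ∈ V := (hH.1.edge_mem _ he₁).2
  have hne₂' : ((HNode.node ℓ' Up'), (HNode.node ℓ' Uc')) ≠ ((HNode.node ℓ Up), (HNode.node ℓ Uc)) := fun h => h1 (congrArg Prod.fst h)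
  have hne₁' : ((HNode.node ℓ Up), (HNode.node ℓ Uc)) ≠ ((HNode.node ℓ' Up'), (HNode.node ℓ' Uc')) := fun h => hne₂' h.symm
  have hnp1p2 : (HNode.node ℓ ((Up ∪ Uc) \ {cladeUnion (HNode.node ℓ Uc)})) ≠ (HNode.node ℓ' Up') := fun h => hnp1V (h ▸ hvp2V)
  have hnp1c2 : (HNode.node ℓ ((Up ∪ Uc) \ {cladeUnion (HNode.node ℓ Uc)})) ≠ (HNode.node ℓ' Uc') := fun h => hnp1V (h ▸ hvc2V)
  have hnp2p1 : (HNode.node ℓ' ((Up' ∪ Uc') \ {cladeUnion (HNode.node ℓ' Uc')})) ≠ (HNode.node ℓ Up) := fun h => hnp2V (h ▸ hvpV)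
  have hnp2c1 : (HNode.node ℓ' ((Up' ∪ Uc') \ {cladeUnion (HNode.node ℓ' Uc')})) ≠ (HNode.node ℓ Uc) := fun h => hnp2V (h ▸ hvcV)
  have hmap : ∀ v ∈ V,
      collapseMap (HNode.node ℓ' Up') (HNode.node ℓ' Uc') (newParent (HNode.node ℓ' Up') (HNode.node ℓ' Uc'))
        (collapseMap (HNode.node ℓ Up) (HNode.node ℓ Uc) (newParent (HNode.node ℓ Up) (HNode.node ℓ Uc)) v)
      = collapseMap (HNode.node ℓ Up) (HNode.node ℓ Uc) (newParent (HNode.node ℓ Up) (HNode.node ℓ Uc))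
        (collapseMap (HNode.node ℓ' Up') (HNode.node ℓ' Uc') (newParent (HNode.node ℓ' Up') (HNode.node ℓ' Uc')) v) := by
    intro v hv
    simp only [newParent_node]
    by_cases h5 : v = (HNode.node ℓ Up)
    · subst h5
      rw [collapseMap_left, collapseMap_other hnp1p2 hnp1c2,
        collapseMap_other h1' h3', collapseMap_left]
    · by_cases h6 : v = (HNode.node ℓ Uc)
      · subst h6
        rw [collapseMap_right, collapseMap_other hnp1p2 hnp1c2,
          collapseMap_other h2' h4', collapseMap_right]
      · by_cases h7 : v = (HNode.node ℓ' Up')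
        · subst h7
          rw [collapseMap_other h1 h2, collapseMap_left,
            collapseMap_other hnp2p1 hnp2c1]
        · by_cases h8 : v = (HNode.node ℓ' Uc')
          · subst h8
            rw [collapseMap_other h3 h4, collapseMap_right,
              collapseMap_other hnp2p1 hnp2c1]
          · have hvnp1 : v ≠ (HNode.node ℓ ((Up ∪ Uc) \ {cladeUnion (HNode.node ℓ Uc)})) := fun h => hnp1V (h ▸ hv)
            have hvnp2 : v ≠ (HNode.node ℓ' ((Up' ∪ Uc') \ {cladeUnion (HNode.node ℓ' Uc')})) := fun h => hnp2V (h ▸ hv)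
            rw [collapseMap_other h5 h6, collapseMap_other h7 h8,
              collapseMap_other h5 h6]
  refine ⟨collapseEdgeHist (HNode.node ℓ' Up') (HNode.node ℓ' Uc') (newParent (HNode.node ℓ' Up') (HNode.node ℓ' Uc'))
      (collapseEdgeHist (HNode.node ℓ Up) (HNode.node ℓ Uc) (newParent (HNode.node ℓ Up) (HNode.node ℓ Uc)) (V, E)),
    ⟨ℓ', Up', Uc', ?_, hUc', rfl⟩,
    ⟨ℓ, Up, Uc, ?_, hUc, ?_⟩⟩
  · refine ⟨((HNode.node ℓ' Up'), (HNode.node ℓ' Uc')), ⟨he₂, by simp only [Set.mem_singleton_iff]; exact hne₂'⟩, ?_⟩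
    simp only [newParent_node]
    show (collapseMap (HNode.node ℓ Up) (HNode.node ℓ Uc) (HNode.node ℓ ((Up ∪ Uc) \ {cladeUnion (HNode.node ℓ Uc)})) (HNode.node ℓ' Up'), collapseMap (HNode.node ℓ Up) (HNode.node ℓ Uc) (HNode.node ℓ ((Up ∪ Uc) \ {cladeUnion (HNode.node ℓ Uc)})) (HNode.node ℓ' Uc')) = _
    rw [collapseMap_other h1 h2, collapseMap_other h3 h4]
  · refine ⟨((HNode.node ℓ Up), (HNode.node ℓ Uc)), ⟨he₁, by simp only [Set.mem_singleton_iff]; exact hne₁'⟩, ?_⟩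
    simp only [newParent_node]
    show (collapseMap (HNode.node ℓ' Up') (HNode.node ℓ' Uc') (HNode.node ℓ' ((Up' ∪ Uc') \ {cladeUnion (HNode.node ℓ' Uc')})) (HNode.node ℓ Up), collapseMap (HNode.node ℓ' Up') (HNode.node ℓ' Uc') (HNode.node ℓ' ((Up' ∪ Uc') \ {cladeUnion (HNode.node ℓ' Uc')})) (HNode.node ℓ Uc)) = _
    rw [collapseMap_other h1' h3', collapseMap_other h2' h4']
  · have ht₁ : collapseEdgeHist (HNode.node ℓ Up) (HNode.node ℓ Uc) (newParent (HNode.node ℓ Up) (HNode.node ℓ Uc)) (V, E)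
        = (collapseMap (HNode.node ℓ Up) (HNode.node ℓ Uc) (newParent (HNode.node ℓ Up) (HNode.node ℓ Uc)) '' V,
           (fun e : HNode Y × HNode Y => (collapseMap (HNode.node ℓ Up) (HNode.node ℓ Uc) (newParent (HNode.node ℓ Up) (HNode.node ℓ Uc)) e.1,
              collapseMap (HNode.node ℓ Up) (HNode.node ℓ Uc) (newParent (HNode.node ℓ Up) (HNode.node ℓ Uc)) e.2)) '' (E \ {((HNode.node ℓ Up), (HNode.node ℓ Uc))})) := rfl
    have ht₂ : collapseEdgeHist (HNode.node ℓ' Up') (HNode.node ℓ' Uc') (newParent (HNode.node ℓ' Up') (HNode.node ℓ' Uc')) (V, E)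
        = (collapseMap (HNode.node ℓ' Up') (HNode.node ℓ' Uc') (newParent (HNode.node ℓ' Up') (HNode.node ℓ' Uc')) '' V,
           (fun e : HNode Y × HNode Y => (collapseMap (HNode.node ℓ' Up') (HNode.node ℓ' Uc') (newParent (HNode.node ℓ' Up') (HNode.node ℓ' Uc')) e.1,
              collapseMap (HNode.node ℓ' Up') (HNode.node ℓ' Uc') (newParent (HNode.node ℓ' Up') (HNode.node ℓ' Uc')) e.2)) ''
             (E \ {((HNode.node ℓ' Up'), (HNode.node ℓ' Uc'))})) := rfl
    rw [ht₁, ht₂]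
    simp only [newParent_node]
    rw [collapse_collapse_repr hH he₁ hUc he₂ hne₂'
        (collapseMap_other h1 h2) (collapseMap_other h3 h4),
      collapse_collapse_repr hH he₂ hUc' he₁ hne₁'
        (collapseMap_other h1' h3') (collapseMap_other h2' h4')]
    rw [Set.diff_diff_comm]
    exact (repr_eq hH (by
        intro v hv
        have := (hmap v hv).symm
        simpa only [newParent_node] using this)
      (fun e he' => he'.1.1)).symm

end DiamondCaseD


section Newman

variable {Y : Type u}

lemma diamond {t s₁ s₂ : Hist Y} (hH : IsHistory t.1 t.2)
    (h1 : LabelCollapseStep t s₁) (h2 : LabelCollapseStep t s₂) :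
    s₁ = s₂ ∨ ∃ u, LabelCollapseStep s₁ u ∧ LabelCollapseStep s₂ u := by
  obtain ⟨V, E⟩ := t
  obtain ⟨ℓ₁, Up₁, Uc₁, he₁, hUc₁, rfl⟩ := h1
  obtain ⟨ℓ₂, Up₂, Uc₂, he₂, hUc₂, rfl⟩ := h2
  by_cases heq : (HNode.node ℓ₂ Up₂ : HNode Y) = HNode.node ℓ₁ Up₁ ∧
      (HNode.node ℓ₂ Uc₂ : HNode Y) = HNode.node ℓ₁ Uc₁
  · left
    rw [heq.1, heq.2]
  · right
    by_cases hA : (HNode.node ℓ₂ Uc₂ : HNode Y) = HNode.node ℓ₁ Up₁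
    · injection hA with hl hU
      subst hl
      subst hU
      exact diamond_grandparent hH he₁ hUc₁ he₂ hUc₂
    · by_cases hB : (HNode.node ℓ₂ Up₂ : HNode Y) = HNode.node ℓ₁ Uc₁
      · injection hB with hl hU
        subst hl
        subst hU
        exact diamond_child hH he₁ hUc₁ he₂ hUc₂
      · by_cases hC : (HNode.node ℓ₂ Up₂ : HNode Y) = HNode.node ℓ₁ Up₁
        · injection hC with hl hU
          subst hl
          subst hU
          have hne : (HNode.node ℓ₂ Uc₂ : HNode Y) ≠ HNode.node ℓ₂ Uc₁ := by
            intro h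
            exact heq ⟨rfl, h⟩
          exact diamond_sibling hH he₁ hUc₁ he₂ hUc₂ hne
        · have h4 : (HNode.node ℓ₂ Uc₂ : HNode Y) ≠ HNode.node ℓ₁ Uc₁ := by
            intro h
            apply hC
            rw [h] at he₂
            exact unique_parent hH he₂ he₁
          exact diamond_disjoint hH he₁ hUc₁ he₂ hUc₂ hC hB hA h4

lemma collapsed_unique : ∀ n : ℕ, ∀ t : Hist Y, IsHistory t.1 t.2 → t.2.ncard ≤ n →
    ∀ t₁ t₂, Relation.ReflTransGen LabelCollapseStep t t₁ → LabelCollapsed t₁ →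
      Relation.ReflTransGen LabelCollapseStep t t₂ → LabelCollapsed t₂ → t₁ = t₂ := by
  intro n
  induction n using Nat.strong_induction_on with
  | _ n ih =>
  intro t hH hcard t₁ t₂ hr1 hc1 hr2 hc2
  have hstop : LabelCollapsed t →
      ∀ s, Relation.ReflTransGen LabelCollapseStep t s → s = t := by
    intro hc s hr
    rcases Relation.ReflTransGen.cases_head hr with rfl | ⟨s', hstep, _⟩
    · rfl
    · obtain ⟨ℓ, Up, Uc, he, hUc, _⟩ := hstep
      exact absurd (hc ℓ Up Uc he) hUc
  rcases Relation.ReflTransGen.cases_head hr1 with rfl | ⟨s₁, hstep1, hr1'⟩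
  · exact (hstop hc1 t₂ hr2).symm
  rcases Relation.ReflTransGen.cases_head hr2 with rfl | ⟨s₂, hstep2, hr2'⟩
  · exact hstop hc2 t₁ hr1
  have hH1 : IsHistory s₁.1 s₁.2 := step_isHistory hH hstep1
  have hH2 : IsHistory s₂.1 s₂.2 := step_isHistory hH hstep2
  have hlt1 : s₁.2.ncard < t.2.ncard := step_card hH hstep1
  have hlt2 : s₂.2.ncard < t.2.ncard := step_card hH hstep2
  rcases diamond hH hstep1 hstep2 with rfl | ⟨u, hu1, hu2⟩
  · exact ih s₁.2.ncard (lt_of_lt_of_le hlt1 hcard) s₁ hH1 le_rfl t₁ t₂ hr1' hc1 hr2' hc2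
  · have hHu : IsHistory u.1 u.2 := step_isHistory hH1 hu1
    obtain ⟨w, hw, hcw, _⟩ := exists_collapsed u.2.ncard u hHu le_rfl
    have h1w : t₁ = w := ih s₁.2.ncard (lt_of_lt_of_le hlt1 hcard) s₁ hH1 le_rfl t₁ w
      hr1' hc1 (Relation.ReflTransGen.head hu1 hw) hcw
    have h2w : t₂ = w := ih s₂.2.ncard (lt_of_lt_of_le hlt2 hcard) s₂ hH2 le_rfl t₂ w
      hr2' hc2 (Relation.ReflTransGen.head hu2 hw) hcw
    rw [h1w, h2w]

end Newman

/-- a history determines a unique label-collapsed history, reached by a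
finite sequence of collapses of label-collapsible edges; any such sequence ending in a
label-collapsed history ends at that same history. -/
theorem label_collapse_unique
    (t₀ : Hist Y) (h : IsHistory t₀.1 t₀.2) :
    ∃ tc : Hist Y,
      Relation.ReflTransGen LabelCollapseStep t₀ tc ∧ LabelCollapsed tc ∧
      IsHistory tc.1 tc.2 ∧
      ∀ t' : Hist Y, Relation.ReflTransGen LabelCollapseStep t₀ t' → LabelCollapsed t' →
        t' = tc := by
  obtain ⟨tc, hr, hcol, hhist⟩ := exists_collapsed t₀.2.ncard t₀ h le_rfl
  exact ⟨tc, hr, hcol, hhist, fun t' hr' hc' =>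
    collapsed_unique t₀.2.ncard t₀ h le_rfl t' tc hr' hc' hr hcol⟩

end HistorySDAGs
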